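/- arXiv:1409.3780 — 3 statements merged into one kernel-verified Lean document; each statement's English description precedes it below -/
import Mathlib

section
/- Proposition 2.1 (infinite-horizon representation of the running infimum of the future drawup). Assume E[max(X_1,0)] < ∞ and E[X_1] < 0 (mean possibly −∞), so that M := sup_{s≥0} X_s is finite almost surely. Then for every t ≥ 0, \underline U^*_t = inf_{0≤u≤t} sup_{v≥u}(X_v − X_u) is equal in distribution to max{ M̃ − D_t , 0 }, where M̃ is any random variable independent of σ(X_u : 0 ≤ u ≤ t) with the same law as M; equivalently, for every x ≥ 0, P(\underline U^*_t > x) = ∫_{[0,∞)} P(M > x + z) P(D_t ∈ dz). -/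
open MeasureTheory ProbabilityTheory Filter Set

noncomputable section

variable {Ω : Type*} [MeasurableSpace Ω]

/-- Running supremum of the process on `[0, t]`. -/
def ovX (X : ℝ → Ω → ℝ) (t : ℝ) (ω : Ω) : ℝ := sSup ((fun s => X s ω) '' Icc 0 t)

/-- Running infimum of the process on `[0, t]`. -/
def unX (X : ℝ → Ω → ℝ) (t : ℝ) (ω : Ω) : ℝ := sInf ((fun s => X s ω) '' Icc 0 t)

/-- Drawup `U_t = X_t - inf_{0≤s≤t} X_s`. -/
def drawup (X : ℝ → Ω → ℝ) (t : ℝ) (ω : Ω) : ℝ := X t ω - unX X t ω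

/-- Drawdown `D_t = sup_{0≤s≤t} X_s - X_t`. -/
def drawdown (X : ℝ → Ω → ℝ) (t : ℝ) (ω : Ω) : ℝ := ovX X t ω - X t ω

/-- Running supremum of the drawup. -/
def ovU (X : ℝ → Ω → ℝ) (t : ℝ) (ω : Ω) : ℝ := sSup ((fun u => drawup X u ω) '' Icc 0 t)

/-- Running supremum of the drawdown. -/
def ovD (X : ℝ → Ω → ℝ) (t : ℝ) (ω : Ω) : ℝ := sSup ((fun u => drawdown X u ω) '' Icc 0 t)

/-- Future drawup `U^*_{t,s} = sup_{t ≤ u < t+s} (X_u - X_t)`. -/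
def futDrawup (X : ℝ → Ω → ℝ) (t s : ℝ) (ω : Ω) : ℝ :=
  sSup ((fun u => X u ω - X t ω) '' Ico t (t + s))

/-- Future drawdown `D^*_{t,s} = inf_{t ≤ u < t+s} (X_u - X_t)`. -/
def futDrawdown (X : ℝ → Ω → ℝ) (t s : ℝ) (ω : Ω) : ℝ :=
  sInf ((fun u => X u ω - X t ω) '' Ico t (t + s))

/-- `\overline U^*_{t,s} = sup_{0≤u≤t} U^*_{u,s}`. -/
def ovUStar (X : ℝ → Ω → ℝ) (t s : ℝ) (ω : Ω) : ℝ :=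
  sSup ((fun u => futDrawup X u s ω) '' Icc 0 t)

/-- `\underline D^*_{t,s} = inf_{0≤u≤t} D^*_{u,s}`. -/
def unDStar (X : ℝ → Ω → ℝ) (t s : ℝ) (ω : Ω) : ℝ :=
  sInf ((fun u => futDrawdown X u s ω) '' Icc 0 t)

/-- `sup_{v ≥ u} (X_v - X_u)` as an extended real number. -/
def futSupE (X : ℝ → Ω → ℝ) (u : ℝ) (ω : Ω) : EReal :=
  ⨆ v : {v : ℝ // u ≤ v}, ((X v ω - X u ω : ℝ) : EReal)

/-- `inf_{v ≥ u} (X_v - X_u)` as an extended real number. -/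
def futInfE (X : ℝ → Ω → ℝ) (u : ℝ) (ω : Ω) : EReal :=
  ⨅ v : {v : ℝ // u ≤ v}, ((X v ω - X u ω : ℝ) : EReal)

/-- Infinite-horizon `\overline U^*_t = sup_{0≤u≤t} sup_{v≥u}(X_v - X_u)`. -/
def ovUStarInf (X : ℝ → Ω → ℝ) (t : ℝ) (ω : Ω) : EReal :=
  ⨆ u : Icc (0:ℝ) t, futSupE X u ω

/-- Infinite-horizon `\underline U^*_t = inf_{0≤u≤t} sup_{v≥u}(X_v - X_u)`. -/
def unUStarInf (X : ℝ → Ω → ℝ) (t : ℝ) (ω : Ω) : EReal :=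
  ⨅ u : Icc (0:ℝ) t, futSupE X u ω

/-- Infinite-horizon `\overline D^*_t = sup_{0≤u≤t} inf_{v≥u}(X_v - X_u)`. -/
def ovDStarInf (X : ℝ → Ω → ℝ) (t : ℝ) (ω : Ω) : EReal :=
  ⨆ u : Icc (0:ℝ) t, futInfE X u ω

/-- Infinite-horizon `\underline D^*_t = inf_{0≤u≤t} inf_{v≥u}(X_v - X_u)`. -/
def unDStarInf (X : ℝ → Ω → ℝ) (t : ℝ) (ω : Ω) : EReal :=
  ⨅ u : Icc (0:ℝ) t, futInfE X u ω

/-- All-time supremum `M = sup_{s ≥ 0} X_s` as an extended real number. -/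
def MSup (X : ℝ → Ω → ℝ) (ω : Ω) : EReal := ⨆ s : {s : ℝ // 0 ≤ s}, ((X s ω : ℝ) : EReal)

/-- All-time infimum `I = inf_{s ≥ 0} X_s` as an extended real number. -/
def IInf (X : ℝ → Ω → ℝ) (ω : Ω) : EReal := ⨅ s : {s : ℝ // 0 ≤ s}, ((X s ω : ℝ) : EReal)

/-- A (real-valued) Lévy process: càdlàg paths started at `0`, with stationary
increments that are independent of the past. -/
structure IsLevyProcess (P : Measure Ω) (X : ℝ → Ω → ℝ) : Prop where
  measurable : ∀ t : ℝ, Measurable (X t)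
  init : ∀ ω, X 0 ω = 0
  right_cont : ∀ ω, ∀ t : ℝ, 0 ≤ t → ContinuousWithinAt (fun u => X u ω) (Ici t) t
  left_lim : ∀ ω, ∀ t : ℝ, 0 < t → ∃ l : ℝ, Tendsto (fun u => X u ω) (nhdsWithin t (Iio t)) (nhds l)
  indep_incr : ∀ t : ℝ, 0 ≤ t →
    IndepFun (fun ω => (fun s : ℝ => X (t + max s 0) ω - X t ω))
      (fun ω => (fun u : Icc (0:ℝ) t => X u ω)) P
  stat_incr : ∀ t : ℝ, 0 ≤ t →
    Measure.map (fun ω => (fun s : ℝ => X (t + max s 0) ω - X t ω)) P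
      = Measure.map (fun ω => (fun s : ℝ => X (max s 0) ω)) P

/-- An exponential random variable of rate `q`, independent of the whole path of `X`. -/
structure IsExpIndep (P : Measure Ω) (X : ℝ → Ω → ℝ) (q : ℝ) (e : Ω → ℝ) : Prop where
  meas : Measurable e
  nonneg : ∀ ω, 0 ≤ e ω
  law : ∀ x : ℝ, 0 ≤ x → P {ω | x < e ω} = ENNReal.ofReal (Real.exp (-q * x))
  indep : IndepFun e (fun ω => (fun s : {s : ℝ // 0 ≤ s} => X s ω)) P

/-- Cramér's condition with exponent `γ`. -/
structure CramerCond (P : Measure Ω) (X : ℝ → Ω → ℝ) (γ : ℝ) : Prop where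
  gamma_pos : 0 < γ
  int_exp : Integrable (fun ω => Real.exp (γ * X 1 ω)) P
  exp_eq_one : ∫ ω, Real.exp (γ * X 1 ω) ∂P = 1
  int_X1 : Integrable (X 1) P
  mean_neg : ∫ ω, X 1 ω ∂P < 0
  int_exp_abs : Integrable (fun ω => Real.exp (γ * X 1 ω) * |X 1 ω|) P



/-! ### Auxiliary lemmas for the proof -/

section Aux

open Filter

lemma bddAbove_of_cadlag (f : ℝ → ℝ)
    (hr : ∀ s : ℝ, 0 ≤ s → ContinuousWithinAt f (Ici s) s)
    (hl : ∀ s : ℝ, 0 < s → ∃ l : ℝ, Tendsto f (nhdsWithin s (Iio s)) (nhds l))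
    (t : ℝ) : BddAbove (f '' Icc 0 t) := by
  by_contra hb
  have h : ∀ n : ℕ, ∃ s ∈ Icc (0:ℝ) t, (n : ℝ) < f s := by
    intro n
    rcases not_bddAbove_iff.1 hb (n : ℝ) with ⟨y, hy, hny⟩
    rcases hy with ⟨s, hs, rfl⟩
    exact ⟨s, hs, hny⟩
  choose u hu hfu using h
  obtain ⟨x, hx, φ, hφ, hux⟩ := (isCompact_Icc (a := (0:ℝ)) (b := t)).tendsto_subseq hu
  have key : ∀ (ψ : ℕ → ℕ), StrictMono ψ → ∀ (l : Filter ℝ) (c : ℝ),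
      Tendsto (u ∘ φ ∘ ψ) atTop l → Tendsto f l (nhds c) → False := by
    intro ψ hψ l c h1 h2
    have htends : Tendsto (f ∘ u ∘ φ ∘ ψ) atTop (nhds c) := h2.comp h1
    have hdiv : Tendsto (f ∘ u ∘ φ ∘ ψ) atTop atTop := by
      refine tendsto_atTop_mono (f := fun n : ℕ => (n : ℝ)) (g := f ∘ u ∘ φ ∘ ψ) ?_
        tendsto_natCast_atTop_atTop
      intro n
      calc (n:ℝ) ≤ (φ (ψ n) : ℝ) := by
            exact_mod_cast le_trans (hψ.le_apply) (hφ.le_apply)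
        _ ≤ f (u (φ (ψ n))) := (hfu _).le
    exact not_tendsto_nhds_of_tendsto_atTop hdiv c htends
  by_cases hcase : ∃ᶠ k in atTop, x ≤ u (φ k)
  · obtain ⟨ψ, hψ, hge⟩ := extraction_of_frequently_atTop hcase
    refine key ψ hψ (nhdsWithin x (Ici x)) (f x) ?_ (hr x hx.1)
    exact tendsto_nhdsWithin_of_tendsto_nhds_of_eventually_within _
      (hux.comp hψ.tendsto_atTop) (Eventually.of_forall hge)
  · have hlt : ∃ᶠ k in atTop, u (φ k) < x := by
      rw [not_frequently] at hcase
      exact hcase.mono (fun k hk => not_le.1 hk) |>.frequently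
    obtain ⟨ψ, hψ, hltk⟩ := extraction_of_frequently_atTop hlt
    have hxpos : 0 < x := lt_of_le_of_lt (hu (φ (ψ 0))).1 (hltk 0)
    obtain ⟨l, hlx⟩ := hl x hxpos
    refine key ψ hψ (nhdsWithin x (Iio x)) l ?_ hlx
    exact tendsto_nhdsWithin_of_tendsto_nhds_of_eventually_within _
      (hux.comp hψ.tendsto_atTop) (Eventually.of_forall hltk)

lemma pathwise_main (f : ℝ → ℝ) (t : ℝ) (ht : 0 ≤ t)
    (hbdd : BddAbove (f '' Icc 0 t)) :
    (⨅ u : Icc (0:ℝ) t, ⨆ v : {v : ℝ // (u:ℝ) ≤ v}, ((f v - f u : ℝ) : EReal))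
      = max ((⨆ v : {v : ℝ // t ≤ v}, ((f v - f t : ℝ) : EReal))
          - ((sSup (f '' Icc 0 t) - f t : ℝ) : EReal)) 0 := by
  set R : ℝ := sSup (f '' Icc 0 t) with hR
  set S : EReal := ⨆ v : {v : ℝ // t ≤ v}, ((f v - f t : ℝ) : EReal) with hS
  set D : ℝ := R - f t with hD
  have htmem : (t : ℝ) ∈ Icc (0:ℝ) t := ⟨ht, le_refl t⟩
  have hfuR : ∀ u : ℝ, u ∈ Icc (0:ℝ) t → f u ≤ R := fun u hu =>
    le_csSup hbdd ⟨u, hu, rfl⟩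
  have hS0 : (0 : EReal) ≤ S := by
    have := le_iSup (fun v : {v : ℝ // t ≤ v} => ((f v - f t : ℝ) : EReal)) ⟨t, le_refl t⟩
    exact le_trans (by simp) this
  have hfut0 : ∀ u : Icc (0:ℝ) t,
      (0 : EReal) ≤ ⨆ v : {v : ℝ // (u:ℝ) ≤ v}, ((f v - f u : ℝ) : EReal) := by
    intro u
    have := le_iSup (fun v : {v : ℝ // (u:ℝ) ≤ v} => ((f v - f u : ℝ) : EReal))
      ⟨u, le_refl _⟩
    simpa using this
  apply le_antisymm
  · refine le_of_forall_gt ?_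
    intro c hc
    have hc0 : (0 : EReal) < c := lt_of_le_of_lt (le_max_right _ _) hc
    have hSD : S - (D : EReal) < c := lt_of_le_of_lt (le_max_left _ _) hc
    have hSne : S ≠ ⊤ := by
      intro h
      rw [h, EReal.top_sub_coe] at hSD
      exact not_top_lt hSD
    obtain ⟨s, hs⟩ : ∃ s : ℝ, S = (s : ℝ) := by
      lift S to ℝ using ⟨hSne, ne_bot_of_le_ne_bot (by simp) hS0⟩ with s
      exact ⟨s, rfl⟩
    have hs0 : 0 ≤ s := by exact_mod_cast hs ▸ hS0
    rcases eq_or_ne c ⊤ with rfl | hcne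
    · exact lt_of_le_of_lt (iInf_le _ ⟨t, htmem⟩) (Ne.lt_top hSne)
    · obtain ⟨cr, hcr⟩ : ∃ cr : ℝ, c = (cr : ℝ) := by
        lift c to ℝ using ⟨hcne, ne_bot_of_le_ne_bot (by simp) hc0.le⟩ with cr
        exact ⟨cr, rfl⟩
      set B : ℝ := max (s - D) 0 with hB
      have hBc : B < cr := by
        have h1 : ((s - D : ℝ) : EReal) < (cr : EReal) := by
          rw [← hcr]
          calc ((s - D : ℝ) : EReal) = S - (D : EReal) := by
                rw [hs]; exact (EReal.coe_sub s D)
            _ < c := hSD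
        have h2 : (0:ℝ) < cr := by exact_mod_cast hcr ▸ hc0
        exact max_lt (by exact_mod_cast h1) h2
      set ε : ℝ := cr - B with hε
      have hεpos : 0 < ε := by simp only [hε]; linarith
      obtain ⟨y, hy, hylt⟩ := exists_lt_of_lt_csSup (s := f '' Icc 0 t)
        ⟨f t, ⟨t, htmem, rfl⟩⟩ (show R - ε < sSup (f '' Icc 0 t) by rw [← hR]; linarith)
      obtain ⟨u, hu, rfl⟩ := hy
      set δ : ℝ := R - f u with hδ
      have hδε : δ < ε := by simp only [hδ, hε]; linarith
      have hδ0 : 0 ≤ δ := by simp only [hδ]; linarith [hfuR u hu]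
      refine lt_of_le_of_lt (iInf_le _ ⟨u, hu⟩)
        (lt_of_le_of_lt (b := ((B + δ : ℝ) : EReal)) ?_ ?_)
      · refine iSup_le ?_
        rintro ⟨v, hv⟩
        rw [EReal.coe_le_coe_iff]
        rcases le_or_gt v t with hvt | hvt
        · have : f v ≤ R := hfuR v ⟨le_trans hu.1 hv, hvt⟩
          have : f v - f u ≤ δ := by simp only [hδ]; linarith
          have hB0 : 0 ≤ B := le_max_right _ _
          linarith
        · have hvS : ((f v - f t : ℝ) : EReal) ≤ S :=
            le_iSup (fun v : {v : ℝ // t ≤ v} => ((f v - f t : ℝ) : EReal)) ⟨v, hvt.le⟩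
          have h1 : f v - f t ≤ s := by exact_mod_cast hs ▸ hvS
          have h2 : s - D ≤ B := le_max_left _ _
          have : f v - f u = (f v - f t) - D + δ := by simp only [hD, hδ]; ring
          linarith
      · rw [hcr]
        exact_mod_cast (by linarith : B + δ < cr)
  · refine le_iInf ?_
    rintro ⟨u, hu⟩
    refine max_le ?_ (hfut0 ⟨u, hu⟩)
    refine le_of_forall_lt ?_
    intro c hc
    rcases eq_or_ne c ⊥ with rfl | hcbot
    · exact lt_of_lt_of_le (by simp : (⊥:EReal) < 0) (hfut0 ⟨u, hu⟩)
    · have hcne : c ≠ ⊤ := (lt_of_lt_of_le hc le_top).ne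
      obtain ⟨cr, hcr⟩ : ∃ cr : ℝ, c = (cr : ℝ) := by
        lift c to ℝ using ⟨hcne, hcbot⟩ with cr
        exact ⟨cr, rfl⟩
      have hadd : (c + (D : EReal)) < S := by
        refine (EReal.lt_sub_iff_add_lt (Or.inl (by simp)) (Or.inr hcbot)).1 hc
      rw [hcr] at hadd
      rw [show ((cr : EReal) + (D:EReal)) = ((cr + D : ℝ) : EReal) by exact_mod_cast rfl] at hadd
      rw [hS, lt_iSup_iff] at hadd
      obtain ⟨⟨v, hv⟩, hvlt⟩ := hadd
      have hvlt' : cr + D < f v - f t := by exact_mod_cast hvlt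
      have hfu : f u ≤ R := hfuR u hu
      have : cr < f v - f u := by simp only [hD] at hvlt'; linarith
      calc c = (cr : EReal) := hcr
        _ < ((f v - f u : ℝ) : EReal) := by exact_mod_cast this
        _ ≤ _ := le_iSup (fun v : {v : ℝ // u ≤ v} => ((f v - f u : ℝ) : EReal))
            ⟨v, le_trans hu.2 hv⟩

lemma seq_rat_gt (r : ℝ) : ∃ q : ℕ → ℚ, (∀ n, r < (q n : ℝ)) ∧
    Tendsto (fun n => ((q n : ℝ))) atTop (nhds r) := by
  have h : ∀ n : ℕ, ∃ q : ℚ, r < (q:ℝ) ∧ (q:ℝ) < r + 1/(n+1) := by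
    intro n
    refine exists_rat_btwn ?_
    have hp : (0:ℝ) < 1/((n:ℝ)+1) := by positivity
    linarith
  choose q h1 h2 using h
  refine ⟨q, h1, ?_⟩
  have hub : Tendsto (fun n : ℕ => r + 1/((n:ℝ)+1)) atTop (nhds r) := by
    have := tendsto_one_div_add_atTop_nhds_zero_nat (𝕜 := ℝ)
    simpa using tendsto_const_nhds.add this
  exact tendsto_of_tendsto_of_tendsto_of_le_of_le tendsto_const_nhds hub
    (fun n => (h1 n).le) (fun n => (h2 n).le)

lemma supE_rat (f : ℝ → ℝ) (a : ℝ) (ha : 0 ≤ a)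
    (hr : ∀ s : ℝ, 0 ≤ s → ContinuousWithinAt f (Ici s) s) :
    (⨆ v : {v : ℝ // a ≤ v}, ((f v : ℝ) : EReal))
      = ⨆ q : {q : ℚ // 0 ≤ q}, ((f (a + (q:ℝ)) : ℝ) : EReal) := by
  apply le_antisymm
  · refine iSup_le ?_
    rintro ⟨v, hv⟩
    obtain ⟨q, hq1, hq2⟩ := seq_rat_gt (v - a)
    have hq0 : ∀ n, 0 ≤ q n := fun n => by
      have := hq1 n
      exact_mod_cast le_of_lt (lt_of_le_of_lt (by linarith [hv] : (0:ℝ) ≤ v - a) (hq1 n))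
    have htend : Tendsto (fun n => a + (q n : ℝ)) atTop (nhds v) := by
      have := tendsto_const_nhds (x := a) (f := atTop (α := ℕ)) |>.add hq2
      simpa using this
    have hmem : ∀ n, a + (q n : ℝ) ∈ Ici v := fun n => by
      have := hq1 n; simp only [mem_Ici]; linarith
    have hfv : Tendsto (fun n => f (a + (q n : ℝ))) atTop (nhds (f v)) :=
      (hr v (le_trans ha hv)).tendsto.comp
        (tendsto_nhdsWithin_of_tendsto_nhds_of_eventually_within _ htend
          (Eventually.of_forall hmem))
    refine le_of_tendsto (EReal.tendsto_coe.2 hfv) (Eventually.of_forall fun n => ?_)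
    exact le_iSup (fun q : {q : ℚ // 0 ≤ q} => ((f (a + (q:ℝ)) : ℝ) : EReal)) ⟨q n, hq0 n⟩
  · refine iSup_le ?_
    rintro ⟨q, hq⟩
    refine le_iSup (fun v : {v : ℝ // a ≤ v} => ((f v : ℝ) : EReal))
      ⟨a + (q:ℝ), by
        have h0 : (0:ℝ) ≤ (q:ℝ) := by exact_mod_cast hq
        linarith⟩

lemma iccSupE_rat (f : ℝ → ℝ) (t : ℝ) (ht : 0 ≤ t)
    (hr : ∀ s : ℝ, 0 ≤ s → ContinuousWithinAt f (Ici s) s) :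
    (⨆ v : Icc (0:ℝ) t, ((f v : ℝ) : EReal))
      = max (⨆ q : {q : ℚ // 0 ≤ (q:ℝ) ∧ (q:ℝ) ≤ t}, ((f (q:ℝ) : ℝ) : EReal))
          ((f t : ℝ) : EReal) := by
  apply le_antisymm
  · refine iSup_le ?_
    rintro ⟨v, hv0, hvt⟩
    rcases eq_or_lt_of_le hvt with rfl | hvt'
    · exact le_max_right _ _
    · refine le_trans ?_ (le_max_left _ _)
      obtain ⟨q, hq1, hq2⟩ := seq_rat_gt v
      have hqt : ∀ᶠ n in atTop, (q n : ℝ) ≤ t := by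
        have : ∀ᶠ n in atTop, (q n : ℝ) < t := hq2.eventually_lt_const hvt'
        exact this.mono fun n h => h.le
      have hfv : Tendsto (fun n => f ((q n : ℝ))) atTop (nhds (f v)) :=
        (hr v hv0).tendsto.comp
          (tendsto_nhdsWithin_of_tendsto_nhds_of_eventually_within _ hq2
            (Eventually.of_forall fun n => (hq1 n).le))
      refine le_of_tendsto (EReal.tendsto_coe.2 hfv) ?_
      filter_upwards [hqt] with n hn
      exact le_iSup (fun q : {q : ℚ // 0 ≤ (q:ℝ) ∧ (q:ℝ) ≤ t} => ((f (q:ℝ) : ℝ) : EReal))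
        ⟨q n, ⟨le_trans hv0 (hq1 n).le, hn⟩⟩
  · refine max_le (iSup_le ?_) ?_
    · rintro ⟨q, hq0, hqt⟩
      exact le_iSup (fun v : Icc (0:ℝ) t => ((f v : ℝ) : EReal)) ⟨(q:ℝ), hq0, hqt⟩
    · exact le_iSup (fun v : Icc (0:ℝ) t => ((f v : ℝ) : EReal)) ⟨t, ht, le_refl t⟩

lemma csSup_image_eq_iSup (f : ℝ → ℝ) (s : Set ℝ) (hs : s.Nonempty)
    (hb : BddAbove (f '' s)) :
    ((sSup (f '' s) : ℝ) : EReal) = ⨆ v : s, ((f v : ℝ) : EReal) := by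
  apply le_antisymm
  · refine le_of_forall_lt ?_
    intro c hc
    obtain ⟨x, hx⟩ := hs
    rcases eq_or_ne c ⊥ with rfl | hcbot
    · exact lt_of_lt_of_le (EReal.bot_lt_coe _)
        (le_iSup (fun v : s => ((f v : ℝ) : EReal)) ⟨x, hx⟩)
    · have hcne : c ≠ ⊤ := by
        intro h
        rw [h] at hc
        exact not_top_lt (lt_of_lt_of_le hc (le_top)) |>.elim
      obtain ⟨cr, hcr⟩ : ∃ cr : ℝ, c = (cr : ℝ) := by
        lift c to ℝ using ⟨hcne, hcbot⟩ with cr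
        exact ⟨cr, rfl⟩
      rw [hcr] at hc ⊢
      have hcs : cr < sSup (f '' s) := by exact_mod_cast hc
      obtain ⟨y, ⟨v, hv, rfl⟩, hylt⟩ :=
        exists_lt_of_lt_csSup (⟨f x, ⟨x, hx, rfl⟩⟩ : (f '' s).Nonempty) hcs
      exact lt_of_lt_of_le (by exact_mod_cast hylt)
        (le_iSup (fun v : s => ((f v : ℝ) : EReal)) ⟨v, hv⟩)
  · refine iSup_le ?_
    rintro ⟨v, hv⟩
    exact_mod_cast le_csSup hb ⟨v, hv, rfl⟩

/-- Measurable countable-supremum functional used to evaluate the all-time supremum. -/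
def psiE (g : ℝ → ℝ) : EReal := ⨆ q : {q : ℚ // 0 ≤ q}, ((g (q:ℝ) : ℝ) : EReal)

lemma measurable_psiE : Measurable psiE :=
  Measurable.iSup fun _ => measurable_coe_real_ereal.comp (measurable_pi_apply _)

/-- Measurable functional computing the running supremum from the restricted path. -/
def phiSupE (t : ℝ) (ht : 0 ≤ t) (g : Icc (0:ℝ) t → ℝ) : EReal :=
  max (⨆ q : {q : ℚ // 0 ≤ (q:ℝ) ∧ (q:ℝ) ≤ t}, ((g ⟨(q:ℝ), q.2⟩ : ℝ) : EReal))
    ((g ⟨t, ⟨ht, le_refl t⟩⟩ : ℝ) : EReal)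

lemma measurable_phiSupE (t : ℝ) (ht : 0 ≤ t) : Measurable (phiSupE t ht) :=
  Measurable.max
    (Measurable.iSup fun _ => measurable_coe_real_ereal.comp (measurable_pi_apply _))
    (measurable_coe_real_ereal.comp (measurable_pi_apply _))

/-- Measurable functional computing the drawdown from the restricted path. -/
def phiDD (t : ℝ) (ht : 0 ≤ t) (g : Icc (0:ℝ) t → ℝ) : ℝ :=
  (phiSupE t ht g).toReal - g ⟨t, ⟨ht, le_refl t⟩⟩

lemma measurable_phiDD (t : ℝ) (ht : 0 ≤ t) : Measurable (phiDD t ht) :=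
  ((measurable_phiSupE t ht).ereal_toReal).sub (measurable_pi_apply _)

lemma indep_lt_lintegral {Ω : Type*} [MeasurableSpace Ω] (P : Measure Ω)
    [IsProbabilityMeasure P] (D : Ω → ℝ) (M : Ω → EReal)
    (hD : Measurable D) (hM : Measurable M) (h : IndepFun D M P) (x : ℝ) :
    P {ω | ((x + D ω : ℝ) : EReal) < M ω}
      = ∫⁻ d, (Measure.map M P) (Ioi ((x + d : ℝ) : EReal)) ∂(Measure.map D P) := by
  haveI : IsProbabilityMeasure (Measure.map M P) := Measure.isProbabilityMeasure_map hM.aemeasurable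
  have hpair := (ProbabilityTheory.indepFun_iff_map_prod_eq_prod_map_map
    hD.aemeasurable hM.aemeasurable).1 h
  have hA : MeasurableSet {p : ℝ × EReal | ((x + p.1 : ℝ) : EReal) < p.2} :=
    measurableSet_lt (measurable_coe_real_ereal.comp (measurable_const.add measurable_fst))
      measurable_snd
  have h1 : {ω | ((x + D ω : ℝ) : EReal) < M ω}
      = (fun ω => (D ω, M ω)) ⁻¹' {p : ℝ × EReal | ((x + p.1 : ℝ) : EReal) < p.2} := rfl
  rw [h1, ← Measure.map_apply (hD.prodMk hM) hA, hpair, Measure.prod_apply hA]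
  rfl

end Aux

/-- **Proposition 2.1** (infinite-horizon representation of the running infimum of the
future drawup): if `E[X_1⁺] < ∞` and the mean of `X_1` is negative (possibly `-∞`),
then `M = sup_{s≥0} X_s` is a.s. finite and, for any `M̃` independent of
`σ(X_u : 0 ≤ u ≤ t)` with the same law as `M`, the random variable
`\underline U^*_t` has the same distribution as `max (M̃ - D_t) 0`. -/
theorem future_drawup_inf_representation_inf_horizon
    {Ω : Type*} [MeasurableSpace Ω] (P : Measure Ω) [IsProbabilityMeasure P]
    (X : ℝ → Ω → ℝ) (hX : IsLevyProcess P X)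
    (hplus : ∫⁻ ω, ENNReal.ofReal (max (X 1 ω) 0) ∂P < ⊤)
    (hmean : ∫⁻ ω, ENNReal.ofReal (max (X 1 ω) 0) ∂P
      < ∫⁻ ω, ENNReal.ofReal (max (-X 1 ω) 0) ∂P)
    (t : ℝ) (ht : 0 ≤ t)
    (Mtilde : Ω → ℝ) (hMmeas : Measurable Mtilde)
    (hMindep : IndepFun Mtilde (fun ω => (fun u : Icc (0:ℝ) t => X u ω)) P)
    (hMlaw : ∀ x : ℝ, P {ω | x < Mtilde ω} = P {ω | (x : EReal) < MSup X ω}) :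
    (∀ᵐ ω ∂P, MSup X ω < ⊤) ∧
    (∀ x : ℝ, P {ω | (x : EReal) < unUStarInf X t ω}
        = P {ω | x < max (Mtilde ω - drawdown X t ω) 0}) := by
  have h0mem : (0:ℝ) ∈ Icc (0:ℝ) t := ⟨le_refl 0, ht⟩
  -- Part 1: a.s. finiteness of the all-time supremum, from `hMlaw`.
  have part1 : ∀ᵐ ω ∂P, MSup X ω < ⊤ := by
    rw [ae_iff]
    have hsub : ∀ n : ℕ, {ω | ¬ MSup X ω < ⊤} ⊆ {ω | ((n:ℝ) : EReal) < MSup X ω} := by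
      intro n ω hω
      have hm : MSup X ω = ⊤ := by
        have h' : ¬ MSup X ω < ⊤ := hω
        rwa [lt_top_iff_ne_top, not_not] at h'
      show ((n:ℝ):EReal) < MSup X ω
      rw [hm]; exact EReal.coe_lt_top _
    have hle : ∀ n : ℕ, P {ω | ¬ MSup X ω < ⊤} ≤ P {ω | ((n:ℝ)) < Mtilde ω} := by
      intro n
      calc P {ω | ¬ MSup X ω < ⊤} ≤ P {ω | ((n:ℝ):EReal) < MSup X ω} :=
            measure_mono (hsub n)
        _ = P {ω | ((n:ℝ)) < Mtilde ω} := (hMlaw (n:ℝ)).symm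
    have hmeasA : ∀ n : ℕ, MeasurableSet {ω | ((n:ℝ)) < Mtilde ω} := fun n =>
      measurableSet_lt measurable_const hMmeas
    have hanti : Antitone (fun n : ℕ => {ω | ((n:ℝ)) < Mtilde ω}) := by
      intro m n hmn ω hω
      exact lt_of_le_of_lt (by exact_mod_cast hmn : (m:ℝ) ≤ (n:ℝ)) hω
    have htend := tendsto_measure_iInter_atTop (μ := P)
      (fun n => (hmeasA n).nullMeasurableSet) hanti ⟨0, measure_ne_top P _⟩
    have hempty : (⋂ n : ℕ, {ω | ((n:ℝ)) < Mtilde ω}) = ∅ := by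
      ext ω
      simp only [mem_iInter, mem_setOf_eq, mem_empty_iff_false, iff_false, not_forall, not_lt]
      obtain ⟨n, hn⟩ := exists_nat_gt (Mtilde ω)
      exact ⟨n, hn.le⟩
    rw [hempty, measure_empty] at htend
    exact le_antisymm (ge_of_tendsto htend (Eventually.of_forall hle)) zero_le
  refine ⟨part1, ?_⟩
  -- Setup: increment process, restricted path, shifted process.
  have hstat := hX.stat_incr t ht
  have hind := hX.indep_incr t ht
  have hMind := hMindep
  set Z : Ω → (ℝ → ℝ) := fun ω => (fun s : ℝ => X (t + max s 0) ω - X t ω) with hZ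
  set W : Ω → (ℝ → ℝ) := fun ω => (fun s : ℝ => X (max s 0) ω) with hW
  set Γ : Ω → (Icc (0:ℝ) t → ℝ) := fun ω => (fun u : Icc (0:ℝ) t => X u ω) with hΓ
  set M' : Ω → EReal := psiE ∘ Z with hM'
  have hbddA : ∀ ω, BddAbove ((fun s => X s ω) '' Icc 0 t) := fun ω =>
    bddAbove_of_cadlag _ (fun s hs => hX.right_cont ω s hs)
      (fun s hs => hX.left_lim ω s hs) t
  -- Pathwise identification of M' with the future supremum at time t.
  have hM'eq : ∀ ω, M' ω = futSupE X t ω := by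
    intro ω
    have h1 := supE_rat (fun v => X v ω - X t ω) t ht
      (fun s hs => (hX.right_cont ω s hs).sub continuousWithinAt_const)
    calc M' ω = ⨆ q : {q : ℚ // 0 ≤ q}, ((X (t + (q:ℝ)) ω - X t ω : ℝ) : EReal) := by
          rw [hM']
          exact iSup_congr fun q => by
            simp only [Function.comp, hZ]
            rw [max_eq_left (by exact_mod_cast q.2 : (0:ℝ) ≤ (q:ℝ))]
      _ = futSupE X t ω := h1.symm
  -- Pathwise identification of psiE ∘ W with MSup.
  have hMSupEq : ∀ ω, psiE (W ω) = MSup X ω := by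
    intro ω
    have h1 := supE_rat (fun v => X v ω) 0 (le_refl 0) (fun s hs => hX.right_cont ω s hs)
    calc psiE (W ω) = ⨆ q : {q : ℚ // 0 ≤ q}, ((X (0 + (q:ℝ)) ω : ℝ) : EReal) := by
          exact iSup_congr fun q => by
            simp only [hW]
            rw [max_eq_left (by exact_mod_cast q.2 : (0:ℝ) ≤ (q:ℝ)), zero_add]
      _ = MSup X ω := h1.symm
  -- Pathwise identification of the drawdown with a measurable functional of the path.
  have hovXeq : ∀ ω, ((ovX X t ω : ℝ) : EReal) = phiSupE t ht (Γ ω) := by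
    intro ω
    have h1 := csSup_image_eq_iSup (fun s => X s ω) (Icc 0 t) ⟨0, h0mem⟩ (hbddA ω)
    have h2 := iccSupE_rat (fun s => X s ω) t ht (fun s hs => hX.right_cont ω s hs)
    show ((sSup ((fun s => X s ω) '' Icc 0 t) : ℝ) : EReal) = phiSupE t ht (Γ ω)
    rw [h1, h2]
    rfl
  have hDeq : ∀ ω, drawdown X t ω = phiDD t ht (Γ ω) := by
    intro ω
    have h1 : ovX X t ω = (phiSupE t ht (Γ ω)).toReal := by
      rw [← hovXeq ω, EReal.toReal_coe]
    show ovX X t ω - X t ω = (phiSupE t ht (Γ ω)).toReal - Γ ω ⟨t, ⟨ht, le_refl t⟩⟩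
    rw [h1]
  -- Pathwise main identity.
  have hpath : ∀ ω, unUStarInf X t ω = max (M' ω - ((drawdown X t ω : ℝ) : EReal)) 0 := by
    intro ω
    have h := pathwise_main (fun s => X s ω) t ht (hbddA ω)
    rw [hM'eq ω]
    exact h
  -- Measurability.
  have hZmeas : Measurable Z :=
    measurable_pi_lambda _ fun s => (hX.measurable _).sub (hX.measurable t)
  have hWmeas : Measurable W := measurable_pi_lambda _ fun s => hX.measurable _
  have hΓmeas : Measurable Γ := measurable_pi_lambda _ fun u => hX.measurable _
  have hM'meas : Measurable M' := measurable_psiE.comp hZmeas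
  have hDfun : drawdown X t = phiDD t ht ∘ Γ := funext hDeq
  have hDmeas : Measurable (drawdown X t) := by
    rw [hDfun]; exact (measurable_phiDD t ht).comp hΓmeas
  -- Law of M'.
  have hlawM' : ∀ c : ℝ, P {ω | (c : EReal) < M' ω} = P {ω | c < Mtilde ω} := by
    intro c
    have hA : MeasurableSet {g : ℝ → ℝ | (c : EReal) < psiE g} :=
      measurable_psiE measurableSet_Ioi
    have h1 : P {ω | (c : EReal) < M' ω} = Measure.map Z P {g | (c:EReal) < psiE g} := by
      rw [Measure.map_apply hZmeas hA]; rfl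
    have h2 : Measure.map Z P = Measure.map W P := hstat
    have h3 : Measure.map W P {g | (c:EReal) < psiE g} = P {ω | (c:EReal) < psiE (W ω)} := by
      rw [Measure.map_apply hWmeas hA]; rfl
    have h4 : {ω | (c:EReal) < psiE (W ω)} = {ω | (c:EReal) < MSup X ω} := by
      ext ω; rw [mem_setOf_eq, mem_setOf_eq, hMSupEq ω]
    rw [h1, h2, h3, h4, ← hMlaw c]
  -- Independence.
  have hIndep1 : IndepFun M' (drawdown X t) P := by
    have h := hind.comp measurable_psiE (measurable_phiDD t ht)
    rw [hDfun]
    exact h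
  have hIndep2 : IndepFun Mtilde (drawdown X t) P := by
    have h := hMind.comp measurable_id (measurable_phiDD t ht)
    rw [hDfun]
    exact h
  have hIndep2' : IndepFun (drawdown X t) (fun ω => ((Mtilde ω : ℝ) : EReal)) P :=
    (hIndep2.comp measurable_coe_real_ereal measurable_id).symm
  have hcoeMeas : Measurable (fun ω => ((Mtilde ω : ℝ) : EReal)) :=
    measurable_coe_real_ereal.comp hMmeas
  -- Final computation.
  intro x
  rcases lt_or_ge x 0 with hx | hx
  · have e1 : {ω | (x : EReal) < unUStarInf X t ω} = univ := by
      ext ω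
      simp only [mem_setOf_eq, mem_univ, iff_true]
      have h0 : (0:EReal) ≤ unUStarInf X t ω := by
        rw [hpath ω]; exact le_max_right _ _
      exact lt_of_lt_of_le (by exact_mod_cast hx : (x:EReal) < (0:EReal)) h0
    have e2 : {ω | x < max (Mtilde ω - drawdown X t ω) 0} = univ := by
      ext ω
      simp only [mem_setOf_eq, mem_univ, iff_true]
      exact lt_of_lt_of_le hx (le_max_right _ _)
    rw [e1, e2]
  · have e1 : {ω | (x : EReal) < unUStarInf X t ω}
        = {ω | ((x + drawdown X t ω : ℝ) : EReal) < M' ω} := by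
      ext ω
      rw [mem_setOf_eq, mem_setOf_eq, hpath ω, lt_max_iff]
      constructor
      · rintro (h | h)
        · rwa [EReal.lt_sub_iff_add_lt (Or.inl (EReal.coe_ne_bot _))
            (Or.inl (EReal.coe_ne_top _)), ← EReal.coe_add] at h
        · exact absurd h (by exact_mod_cast not_lt.2 hx)
      · intro h
        left
        rw [EReal.lt_sub_iff_add_lt (Or.inl (EReal.coe_ne_bot _))
          (Or.inl (EReal.coe_ne_top _)), ← EReal.coe_add]
        exact h
    have e2 : {ω | x < max (Mtilde ω - drawdown X t ω) 0}
        = {ω | ((x + drawdown X t ω : ℝ) : EReal) < ((Mtilde ω : ℝ) : EReal)} := by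
      ext ω
      rw [mem_setOf_eq, mem_setOf_eq, lt_max_iff, EReal.coe_lt_coe_iff]
      constructor
      · rintro (h | h)
        · linarith
        · linarith
      · intro h; left; linarith
    rw [e1, e2]
    rw [indep_lt_lintegral P (drawdown X t) M' hDmeas hM'meas hIndep1.symm x,
      indep_lt_lintegral P (drawdown X t) (fun ω => ((Mtilde ω : ℝ) : EReal)) hDmeas
        hcoeMeas hIndep2' x]
    refine lintegral_congr fun d => ?_
    rw [Measure.map_apply hM'meas measurableSet_Ioi,
      Measure.map_apply hcoeMeas measurableSet_Ioi]
    have e3 : (fun ω => ((Mtilde ω : ℝ) : EReal)) ⁻¹' (Ioi ((x + d : ℝ) : EReal))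
        = {ω | (x + d) < Mtilde ω} := by
      ext ω
      simp only [mem_preimage, mem_Ioi, mem_setOf_eq]
      exact EReal.coe_lt_coe_iff
    have e4 : M' ⁻¹' (Ioi ((x + d : ℝ) : EReal))
        = {ω | ((x + d : ℝ) : EReal) < M' ω} := rfl
    rw [e3, e4, hlawM' (x + d)]

end
end

section
/- Heavy-tailed asymptotics of the running infimum of the future drawup (Theorem 4.1, second assertion). Assume E[X_1] ∈ (−∞, 0), so that M = sup_{s≥0} X_s is finite almost surely, and let α > 0. Suppose the tail function r(x) = P(M > x) satisfies r(x) > 0 for all x ≥ 0 and lim_{x→∞} r(x − y)/r(x) = e^{α y} for every y ∈ ℝ (i.e. the law of M belongs to the class L^{(α)}). Then for every t > 0, lim_{x→∞} P(\underline U^*_t > x) / r(x) = E[e^{−α D_t}] = E[e^{α \underline X_t}], a constant in (0, 1]. -/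
open MeasureTheory ProbabilityTheory Filter Set

noncomputable section

variable {Ω : Type*} [MeasurableSpace Ω]

namespace HTAux

lemma ereal_coe_le_of_forall_sub {c : ℝ} {R : EReal} (h : ∀ ε : ℝ, 0 < ε → ((c - ε : ℝ) : EReal) ≤ R) :
    (c : EReal) ≤ R := by
  by_contra hc
  push_neg at hc
  induction R with
  | bot => exact EReal.coe_ne_bot _ (le_bot_iff.mp (h 1 one_pos))
  | coe r =>
      have h2 := h ((c - r) / 2) (by simpa using (EReal.coe_lt_coe_iff.mp hc))
      rw [EReal.coe_le_coe_iff] at h2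
      have : c < r := by
        have hr : r < c := EReal.coe_lt_coe_iff.mp hc
        linarith
      exact absurd (EReal.coe_lt_coe_iff.mp hc) (by linarith)
  | top => exact absurd hc (not_lt.mpr le_top)

lemma ereal_le_coe_of_forall_add {a : EReal} {x : ℝ} (h : ∀ ε : ℝ, 0 < ε → a ≤ ((x + ε : ℝ) : EReal)) :
    a ≤ (x : EReal) := by
  by_contra hc
  push_neg at hc
  obtain ⟨y, hy1, hy2⟩ := EReal.exists_between_coe_real hc
  have := h (y - x) (by exact_mod_cast sub_pos.mpr (EReal.coe_lt_coe_iff.mp hy1))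
  rw [show x + (y - x) = y by ring] at this
  exact absurd (lt_of_le_of_lt this hy2) (lt_irrefl _)

/-- Supremum over a right-dense countable family equals supremum over the region,
for right-continuous functions. -/
lemma iSup_eq_of_right_dense {f : ℝ → ℝ} {p : ℝ → Prop} {ι : Type*} [Nonempty ι] (g : ι → ℝ)
    (hmem : ∀ i, p (g i))
    (hdense : ∀ s, p s → ∀ δ : ℝ, 0 < δ → ∃ i, s ≤ g i ∧ g i < s + δ)
    (hc : ∀ s, p s → ContinuousWithinAt f (Ici s) s) :
    (⨆ s : {s : ℝ // p s}, ((f s : ℝ) : EReal)) = ⨆ i, ((f (g i) : ℝ) : EReal) := by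
  apply le_antisymm
  · refine iSup_le fun ⟨s, hs⟩ => ?_
    refine ereal_coe_le_of_forall_sub fun ε hε => ?_
    have hev : ∀ᶠ u in nhdsWithin s (Ici s), f s - ε < f u :=
      (hc s hs).eventually (eventually_gt_nhds (by linarith))
    obtain ⟨u', hu', hsub⟩ := mem_nhdsGE_iff_exists_Ico_subset.mp hev
    obtain ⟨i, hi1, hi2⟩ := hdense s hs (u' - s) (by simpa using sub_pos.mpr (mem_Ioi.mp hu'))
    have : f s - ε < f (g i) := hsub ⟨hi1, by linarith⟩
    exact le_trans (EReal.coe_le_coe_iff.mpr this.le) (le_iSup (fun i => ((f (g i) : ℝ) : EReal)) i)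
  · exact iSup_le fun i => le_iSup_of_le ⟨g i, hmem i⟩ le_rfl

/-- A càdlàg-type function is bounded on a compact interval. -/
lemma bdd_of_cadlag {f : ℝ → ℝ} {t : ℝ}
    (hrc : ∀ s : ℝ, 0 ≤ s → ContinuousWithinAt f (Ici s) s)
    (hll : ∀ s : ℝ, 0 < s → ∃ l : ℝ, Tendsto f (nhdsWithin s (Iio s)) (nhds l)) :
    ∃ C : ℝ, ∀ s ∈ Icc (0:ℝ) t, |f s| ≤ C := by
  rcases le_or_gt t 0 with ht | ht
  · refine ⟨|f 0|, fun s hs => ?_⟩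
    have : s = 0 := le_antisymm (hs.2.trans ht) hs.1
    simp [this]
  -- local boundedness
  have hloc : ∀ s ∈ Icc (0:ℝ) t, ∃ V : Set ℝ, V ∈ nhds s ∧ ∃ C : ℝ, ∀ u ∈ V ∩ Icc (0:ℝ) t, |f u| ≤ C := by
    intro s hs
    -- right side
    have h1 : ∀ᶠ u in nhdsWithin s (Ici s), |f u| ≤ |f s| + 1 := by
      refine ((hrc s hs.1).eventually (Metric.closedBall_mem_nhds (f s) one_pos)).mono ?_
      intro u hu
      have : |f u - f s| ≤ 1 := by simpa [Real.dist_eq] using hu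
      calc |f u| ≤ |f u - f s| + |f s| := by
            simpa using abs_add_le (f u - f s) (f s)
        _ ≤ |f s| + 1 := by linarith
    obtain ⟨δ₂, hδ₂, hsub₂⟩ : ∃ δ > 0, ∀ u, s ≤ u → u < s + δ → |f u| ≤ |f s| + 1 := by
      obtain ⟨u', hu', hsub⟩ := mem_nhdsGE_iff_exists_Ico_subset.mp h1
      exact ⟨u' - s, by simpa using sub_pos.mpr (mem_Ioi.mp hu'), fun u h1' h2' => hsub ⟨h1', by linarith⟩⟩
    rcases eq_or_lt_of_le hs.1 with hs0 | hs0
    · refine ⟨Iio (s + δ₂), Iio_mem_nhds (by linarith), |f s| + 1, fun u hu => ?_⟩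
      exact hsub₂ u (hs0 ▸ hu.2.1) hu.1
    · obtain ⟨l, hl⟩ := hll s hs0
      have h2 : ∀ᶠ u in nhdsWithin s (Iio s), |f u| ≤ |l| + 1 := by
        refine (hl.eventually (Metric.closedBall_mem_nhds l one_pos)).mono ?_
        intro u hu
        have : |f u - l| ≤ 1 := by simpa [Real.dist_eq] using hu
        calc |f u| ≤ |f u - l| + |l| := by simpa using abs_add_le (f u - l) l
          _ ≤ |l| + 1 := by linarith
      obtain ⟨u'', hu'', hsub₁⟩ := mem_nhdsLT_iff_exists_Ioo_subset.mp h2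
      refine ⟨Ioo u'' (s + δ₂), Ioo_mem_nhds hu'' (by linarith), max (|f s| + 1) (|l| + 1),
        fun u hu => ?_⟩
      rcases lt_or_ge u s with h | h
      · exact le_max_of_le_right (hsub₁ ⟨hu.1.1, h⟩)
      · exact le_max_of_le_left (hsub₂ u h hu.1.2)
  classical
  choose! V hV C hC using hloc
  obtain ⟨F, hFmem, hFcov⟩ := (isCompact_Icc (a := (0:ℝ)) (b := t)).elim_nhds_subcover V
    (fun s hs => hV s hs)
  rcases F.eq_empty_or_nonempty with hF | hF
  · exfalso
    have h0 : (0:ℝ) ∈ Icc (0:ℝ) t := ⟨le_refl _, ht.le⟩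
    have := hFcov h0
    simp [hF] at this
  refine ⟨F.sup' hF C, fun u hu => ?_⟩
  obtain ⟨s, hsF, hus⟩ := Set.mem_iUnion₂.mp (hFcov hu)
  exact le_trans (hC s (hFmem s hsF) u ⟨hus, hu⟩) (Finset.le_sup' _ hsF)



/-- Dyadic grid points on `[0,t]`. -/
def grid (t : ℝ) (N : ℕ) (k : Fin (2 ^ N + 1)) : ℝ := t * k / 2 ^ N

lemma grid_mem {t : ℝ} (ht : 0 < t) (N : ℕ) (k : Fin (2 ^ N + 1)) :
    grid t N k ∈ Icc (0:ℝ) t := by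
  have h2 : (0:ℝ) < 2 ^ N := by positivity
  constructor
  · have : (0:ℝ) ≤ (k:ℝ) := by positivity
    unfold grid; positivity
  · unfold grid
    rw [div_le_iff₀ h2]
    have hk' : (k : ℕ) ≤ 2 ^ N := by have := k.isLt; omega
    have hk : (k : ℝ) ≤ 2 ^ N := by
      calc (k : ℝ) ≤ ((2 ^ N : ℕ) : ℝ) := by exact_mod_cast hk'
        _ = 2 ^ N := by push_cast; ring
    nlinarith

lemma grid_zero (t : ℝ) (N : ℕ) : grid t N 0 = 0 := by simp [grid]

lemma grid_last (t : ℝ) (N : ℕ) : grid t N (Fin.last _) = t := by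
  have h2 : ((2:ℝ) ^ N) ≠ 0 := by positivity
  simp only [grid, Fin.val_last]
  push_cast
  field_simp

lemma grid_nest (t : ℝ) (N : ℕ) (k : Fin (2 ^ N + 1)) :
    grid t N k = grid t (N+1) ⟨2 * k, by have := k.isLt; omega⟩ := by
  simp only [grid]
  push_cast
  ring

lemma grid_rev {t : ℝ} (N : ℕ) (k : Fin (2 ^ N + 1)) :
    t - grid t N k = grid t N k.rev := by
  have h2 : ((2:ℝ) ^ N) ≠ 0 := by positivity
  have hk : (k : ℕ) ≤ 2 ^ N := by have := k.isLt; omega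
  simp only [grid, Fin.val_rev]
  have hk' : (k : ℕ) ≤ 2 ^ N := by have := k.isLt; omega
  have heq : ((2 ^ N + 1 - ((k:ℕ) + 1) : ℕ) : ℝ) = 2 ^ N - (k:ℝ) := by
    have h : 2 ^ N + 1 - ((k:ℕ) + 1) = 2 ^ N - (k:ℕ) := by omega
    rw [h, Nat.cast_sub hk', Nat.cast_pow]
    norm_num
  rw [heq]
  field_simp

lemma grid_dense {t : ℝ} (ht : 0 < t) {s : ℝ} (hs : s ∈ Icc (0:ℝ) t) {δ : ℝ} (hδ : 0 < δ) :
    ∃ N : ℕ, ∃ k : Fin (2 ^ N + 1), s ≤ grid t N k ∧ grid t N k < s + δ := by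
  rcases eq_or_lt_of_le hs.2 with hst | hst
  · exact ⟨0, Fin.last _, by rw [grid_last]; exact ⟨le_of_eq hst, by linarith⟩⟩
  · obtain ⟨N, hN⟩ := pow_unbounded_of_one_lt (t / δ) (one_lt_two (α := ℝ))
    have h2 : (0:ℝ) < 2 ^ N := by positivity
    have htN : t / 2 ^ N < δ := by
      rw [div_lt_iff₀ h2]
      rw [div_lt_iff₀ hδ] at hN
      nlinarith
    set a : ℝ := s * 2 ^ N / t with ha
    have ha0 : 0 ≤ a := div_nonneg (mul_nonneg hs.1 (by positivity)) ht.le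
    set k : ℕ := ⌈a⌉₊ with hk
    have hkle : k ≤ 2 ^ N := by
      rw [hk, Nat.ceil_le, ha, div_le_iff₀ ht]
      push_cast
      nlinarith [hs.2]
    refine ⟨N, ⟨k, by omega⟩, ?_, ?_⟩
    · show s ≤ t * k / 2 ^ N
      rw [le_div_iff₀ h2]
      have := Nat.le_ceil a
      rw [ha, div_le_iff₀ ht] at this
      · push_cast at this ⊢
        nlinarith
    · show t * k / 2 ^ N < s + δ
      have hlt : (k : ℝ) < a + 1 := Nat.ceil_lt_add_one ha0
      rw [div_lt_iff₀ h2]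
      rw [ha] at hlt
      have h1 : t * (k:ℝ) < t * (s * 2 ^ N / t + 1) := by
        apply mul_lt_mul_of_pos_left hlt ht
      have h2' : t * (s * 2 ^ N / t + 1) = s * 2 ^ N + t := by field_simp
      have h4 : t < δ * 2 ^ N := by rw [div_lt_iff₀ h2] at htN; linarith
      nlinarith

/-- Max of `f` over level-`N` dyadic grid. -/
def dmax (f : ℝ → ℝ) (t : ℝ) (N : ℕ) : ℝ := ⨆ k : Fin (2 ^ N + 1), f (grid t N k)

def dmin (f : ℝ → ℝ) (t : ℝ) (N : ℕ) : ℝ := ⨅ k : Fin (2 ^ N + 1), f (grid t N k)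

lemma le_dmax (f : ℝ → ℝ) (t : ℝ) (N : ℕ) (k : Fin (2 ^ N + 1)) :
    f (grid t N k) ≤ dmax f t N := by
  unfold dmax
  exact le_ciSup (f := fun k => f (grid t N k)) (Set.Finite.bddAbove (finite_range _)) k

lemma dmin_le (f : ℝ → ℝ) (t : ℝ) (N : ℕ) (k : Fin (2 ^ N + 1)) :
    dmin f t N ≤ f (grid t N k) := by
  unfold dmin
  exact ciInf_le (f := fun k => f (grid t N k)) (Set.Finite.bddBelow (finite_range _)) k

lemma dmax_le_sSup {f : ℝ → ℝ} {t : ℝ} (ht : 0 < t) (hb : BddAbove (f '' Icc 0 t)) (N : ℕ) :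
    dmax f t N ≤ sSup (f '' Icc 0 t) :=
  ciSup_le fun k => le_csSup hb ⟨grid t N k, grid_mem ht N k, rfl⟩

lemma sInf_le_dmin {f : ℝ → ℝ} {t : ℝ} (ht : 0 < t) (hb : BddBelow (f '' Icc 0 t)) (N : ℕ) :
    sInf (f '' Icc 0 t) ≤ dmin f t N :=
  le_ciInf fun k => csInf_le hb ⟨grid t N k, grid_mem ht N k, rfl⟩

lemma monotone_dmax (f : ℝ → ℝ) (t : ℝ) : Monotone (dmax f t) := by
  apply monotone_nat_of_le_succ
  intro N
  refine ciSup_le fun k => ?_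
  rw [grid_nest t N k]
  exact le_dmax f t (N+1) _

lemma antitone_dmin (f : ℝ → ℝ) (t : ℝ) : Antitone (dmin f t) := by
  apply antitone_nat_of_succ_le
  intro N
  refine le_ciInf fun k => ?_
  rw [grid_nest t N k]
  exact dmin_le f t (N+1) _

lemma iSup_dmax {f : ℝ → ℝ} {t : ℝ} (ht : 0 < t)
    (hrc : ∀ s : ℝ, 0 ≤ s → ContinuousWithinAt f (Ici s) s)
    (hb : BddAbove (f '' Icc 0 t)) :
    (⨆ N, dmax f t N) = sSup (f '' Icc 0 t) := by
  have hbd : BddAbove (range (dmax f t)) :=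
    ⟨sSup (f '' Icc 0 t), by rintro _ ⟨N, rfl⟩; exact dmax_le_sSup ht hb N⟩
  apply le_antisymm
  · exact ciSup_le fun N => dmax_le_sSup ht hb N
  · refine csSup_le (by exact ⟨f 0, 0, ⟨le_refl _, ht.le⟩, rfl⟩) ?_
    rintro _ ⟨s, hs, rfl⟩
    refine le_of_forall_pos_le_add fun ε hε => ?_
    have hev : ∀ᶠ u in nhdsWithin s (Ici s), f s - ε < f u :=
      (hrc s hs.1).eventually (eventually_gt_nhds (by linarith))
    obtain ⟨u', hu', hsub⟩ := mem_nhdsGE_iff_exists_Ico_subset.mp hev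
    obtain ⟨N, k, h1, h2⟩ := grid_dense ht hs (by simpa using sub_pos.mpr (mem_Ioi.mp hu') : (0:ℝ) < u' - s)
    have : f s - ε < f (grid t N k) := hsub ⟨h1, by linarith⟩
    have h3 : f (grid t N k) ≤ ⨆ N, dmax f t N := le_trans (le_dmax f t N k) (le_ciSup hbd N)
    linarith

lemma iInf_dmin {f : ℝ → ℝ} {t : ℝ} (ht : 0 < t)
    (hrc : ∀ s : ℝ, 0 ≤ s → ContinuousWithinAt f (Ici s) s)
    (hb : BddBelow (f '' Icc 0 t)) :
    (⨅ N, dmin f t N) = sInf (f '' Icc 0 t) := by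
  have hbd : BddBelow (range (dmin f t)) :=
    ⟨sInf (f '' Icc 0 t), by rintro _ ⟨N, rfl⟩; exact sInf_le_dmin ht hb N⟩
  apply le_antisymm
  · refine le_csInf (by exact ⟨f 0, 0, ⟨le_refl _, ht.le⟩, rfl⟩) ?_
    rintro _ ⟨s, hs, rfl⟩
    rw [← sub_nonneg]
    refine le_of_forall_pos_le_add fun ε hε => ?_
    have hev : ∀ᶠ u in nhdsWithin s (Ici s), f u < f s + ε :=
      (hrc s hs.1).eventually (eventually_lt_nhds (by linarith))
    obtain ⟨u', hu', hsub⟩ := mem_nhdsGE_iff_exists_Ico_subset.mp hev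
    obtain ⟨N, k, h1, h2⟩ := grid_dense ht hs (by simpa using sub_pos.mpr (mem_Ioi.mp hu') : (0:ℝ) < u' - s)
    have hlt : f (grid t N k) < f s + ε := hsub ⟨h1, by linarith⟩
    have h3 : ⨅ N, dmin f t N ≤ f (grid t N k) := le_trans (ciInf_le hbd N) (dmin_le f t N k)
    linarith
  · exact le_ciInf fun N => sInf_le_dmin ht hb N

lemma tendsto_dmax {f : ℝ → ℝ} {t : ℝ} (ht : 0 < t)
    (hrc : ∀ s : ℝ, 0 ≤ s → ContinuousWithinAt f (Ici s) s)
    (hb : BddAbove (f '' Icc 0 t)) :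
    Tendsto (dmax f t) atTop (nhds (sSup (f '' Icc 0 t))) := by
  rw [← iSup_dmax ht hrc hb]
  exact tendsto_atTop_ciSup (monotone_dmax f t)
    ⟨sSup (f '' Icc 0 t), by rintro _ ⟨N, rfl⟩; exact dmax_le_sSup ht hb N⟩

lemma tendsto_dmin {f : ℝ → ℝ} {t : ℝ} (ht : 0 < t)
    (hrc : ∀ s : ℝ, 0 ≤ s → ContinuousWithinAt f (Ici s) s)
    (hb : BddBelow (f '' Icc 0 t)) :
    Tendsto (dmin f t) atTop (nhds (sInf (f '' Icc 0 t))) := by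
  rw [← iInf_dmin ht hrc hb]
  exact tendsto_atTop_ciInf (antitone_dmin f t)
    ⟨sInf (f '' Icc 0 t), by rintro _ ⟨N, rfl⟩; exact sInf_le_dmin ht hb N⟩

end HTAux
namespace HTAux

section Levy

variable {Ω : Type*} [MeasurableSpace Ω] {P : Measure Ω} [IsProbabilityMeasure P]
  {X : ℝ → Ω → ℝ}

lemma bddAbove_path (hX : IsLevyProcess P X) (ω : Ω) (t : ℝ) :
    BddAbove ((fun s => X s ω) '' Icc 0 t) := by
  obtain ⟨C, hC⟩ := bdd_of_cadlag (fun s hs => hX.right_cont ω s hs) (fun s hs => hX.left_lim ω s hs)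
  exact ⟨C, by rintro _ ⟨s, hs, rfl⟩; exact (abs_le.mp (hC s hs)).2⟩

lemma bddBelow_path (hX : IsLevyProcess P X) (ω : Ω) (t : ℝ) :
    BddBelow ((fun s => X s ω) '' Icc 0 t) := by
  obtain ⟨C, hC⟩ := bdd_of_cadlag (fun s hs => hX.right_cont ω s hs) (fun s hs => hX.left_lim ω s hs)
  exact ⟨-C, by rintro _ ⟨s, hs, rfl⟩; exact neg_le.mp (neg_le.mpr (abs_le.mp (hC s hs)).1)⟩

lemma le_ovX (hX : IsLevyProcess P X) (ω : Ω) {t s : ℝ} (hs : s ∈ Icc (0:ℝ) t) :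
    X s ω ≤ ovX X t ω :=
  le_csSup (bddAbove_path hX ω t) ⟨s, hs, rfl⟩

lemma drawdown_nonneg (hX : IsLevyProcess P X) (ω : Ω) {t : ℝ} (ht : 0 ≤ t) :
    0 ≤ drawdown X t ω :=
  sub_nonneg.mpr (le_ovX hX ω ⟨ht, le_refl t⟩)

lemma unX_nonpos (hX : IsLevyProcess P X) (ω : Ω) {t : ℝ} (ht : 0 ≤ t) : unX X t ω ≤ 0 := by
  have h := csInf_le (bddBelow_path hX ω t) (⟨0, ⟨le_refl _, ht⟩, rfl⟩ :
    X 0 ω ∈ (fun s => X s ω) '' Icc 0 t)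
  rwa [hX.init ω] at h

lemma ovX_eq_iSup_dmax (hX : IsLevyProcess P X) (ω : Ω) {t : ℝ} (ht : 0 < t) :
    ovX X t ω = ⨆ N, dmax (fun s => X s ω) t N :=
  (iSup_dmax ht (fun s hs => hX.right_cont ω s hs) (bddAbove_path hX ω t)).symm

lemma unX_eq_iInf_dmin (hX : IsLevyProcess P X) (ω : Ω) {t : ℝ} (ht : 0 < t) :
    unX X t ω = ⨅ N, dmin (fun s => X s ω) t N :=
  (iInf_dmin ht (fun s hs => hX.right_cont ω s hs) (bddBelow_path hX ω t)).symm

lemma measurable_dmaxf (hX : IsLevyProcess P X) (t : ℝ) (N : ℕ) :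
    Measurable (fun ω => dmax (fun s => X s ω) t N) := by
  show Measurable fun ω => ⨆ k : Fin (2 ^ N + 1), X (grid t N k) ω
  exact Measurable.iSup fun k => hX.measurable _

lemma measurable_dminf (hX : IsLevyProcess P X) (t : ℝ) (N : ℕ) :
    Measurable (fun ω => dmin (fun s => X s ω) t N) := by
  show Measurable fun ω => ⨅ k : Fin (2 ^ N + 1), X (grid t N k) ω
  exact Measurable.iInf fun k => hX.measurable _

lemma measurable_ovX (hX : IsLevyProcess P X) {t : ℝ} (ht : 0 < t) :
    Measurable (ovX X t) := by
  have h : ovX X t = fun ω => ⨆ N, dmax (fun s => X s ω) t N :=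
    funext fun ω => ovX_eq_iSup_dmax hX ω ht
  rw [h]
  exact Measurable.iSup fun N => measurable_dmaxf hX t N

lemma measurable_unX (hX : IsLevyProcess P X) {t : ℝ} (ht : 0 < t) :
    Measurable (unX X t) := by
  have h : unX X t = fun ω => ⨅ N, dmin (fun s => X s ω) t N :=
    funext fun ω => unX_eq_iInf_dmin hX ω ht
  rw [h]
  exact Measurable.iInf fun N => measurable_dminf hX t N

lemma measurable_drawdown (hX : IsLevyProcess P X) {t : ℝ} (ht : 0 < t) :
    Measurable (drawdown X t) :=
  (measurable_ovX hX ht).sub (hX.measurable t)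

/-- Supremum functional over nonnegative rational coordinates. -/
def Fq : (ℝ → ℝ) → EReal := fun z => ⨆ q : ℚ, ((z (max (q : ℝ) 0) : ℝ) : EReal)

lemma measurable_Fq : Measurable Fq :=
  Measurable.iSup fun q => (measurable_pi_apply _).coe_real_ereal

lemma Fq_path (hX : IsLevyProcess P X) (ω : Ω) :
    Fq (fun s => X (max s 0) ω) = MSup X ω := by
  have h2 := iSup_eq_of_right_dense (f := fun s => X s ω) (p := fun s => 0 ≤ s)
      (fun q : ℚ => max (q : ℝ) 0) (fun q => le_max_right _ _)
      (fun s hs δ hδ => by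
        obtain ⟨q, hq1, hq2⟩ := exists_rat_btwn (show s < s + δ by linarith)
        have hq0 : max (q : ℝ) 0 = (q : ℝ) := max_eq_left (le_trans hs hq1.le)
        exact ⟨q, by show s ≤ max (q:ℝ) 0; rw [hq0]; exact hq1.le,
          by show max (q:ℝ) 0 < s + δ; rw [hq0]; exact hq2⟩)
      (fun s hs => hX.right_cont ω s hs)
  have h1 : ∀ q : ℚ, max (max (q : ℝ) 0) 0 = max (q : ℝ) 0 :=
    fun q => max_eq_left (le_max_right _ _)
  show (⨆ q : ℚ, ((X (max (max (q:ℝ) 0) 0) ω : ℝ) : EReal)) = MSup X ω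
  simp only [h1]
  exact h2.symm

lemma Fq_shift (hX : IsLevyProcess P X) {t : ℝ} (ht : 0 ≤ t) (ω : Ω) :
    Fq (fun s => X (t + max s 0) ω - X t ω) = futSupE X t ω := by
  have h2 := iSup_eq_of_right_dense (f := fun v => X v ω - X t ω) (p := fun v => t ≤ v)
      (fun q : ℚ => t + max (q : ℝ) 0) (fun q => le_add_of_nonneg_right (le_max_right _ _))
      (fun s hs δ hδ => by
        obtain ⟨q, hq1, hq2⟩ := exists_rat_btwn (show s - t < s - t + δ by linarith)
        have hq0 : max (q : ℝ) 0 = (q : ℝ) := max_eq_left (le_trans (by linarith [hs] : (0:ℝ) ≤ s - t) hq1.le)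
        refine ⟨q, by show s ≤ t + max (q:ℝ) 0; rw [hq0]; linarith,
          by show t + max (q:ℝ) 0 < s + δ; rw [hq0]; linarith⟩)
      (fun s hs => (hX.right_cont ω s (le_trans ht hs)).sub continuousWithinAt_const)
  have h1 : ∀ q : ℚ, max (max (q : ℝ) 0) 0 = max (q : ℝ) 0 :=
    fun q => max_eq_left (le_max_right _ _)
  show (⨆ q : ℚ, ((X (t + max (max (q:ℝ) 0) 0) ω - X t ω : ℝ) : EReal)) = futSupE X t ω
  simp only [h1]
  exact h2.symm

/-- Key pointwise event identity. -/
lemma event_iff (hX : IsLevyProcess P X) {t : ℝ} (ht : 0 < t) {x : ℝ} (hx : 0 < x) (ω : Ω) :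
    ((x : EReal) < unUStarInf X t ω) ↔
      (((x + drawdown X t ω : ℝ) : EReal) < futSupE X t ω) := by
  have hB := bddAbove_path hX ω t
  have hfle : ∀ u ∈ Icc (0:ℝ) t, X u ω ≤ ovX X t ω := fun u hu => le_ovX hX ω hu
  have hd : drawdown X t ω = ovX X t ω - X t ω := rfl
  unfold unUStarInf futSupE
  constructor
  · intro h
    by_contra hc
    push_neg at hc
    have hv : ∀ v : ℝ, t ≤ v → X v ω ≤ x + ovX X t ω := by
      intro v hvt
      have h1 : ((X v ω - X t ω : ℝ) : EReal) ≤ ⨆ v : {v : ℝ // t ≤ v}, ((X v.1 ω - X t ω : ℝ) : EReal) :=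
        le_iSup (fun v : {v : ℝ // t ≤ v} => ((X v.1 ω - X t ω : ℝ) : EReal)) ⟨v, hvt⟩
      have h2 := le_trans h1 hc
      rw [EReal.coe_le_coe_iff] at h2
      rw [hd] at h2
      linarith
    have hle : unUStarInf X t ω ≤ (x : EReal) := by
      apply ereal_le_coe_of_forall_add
      intro ε hε
      have hne : ((fun s => X s ω) '' Icc 0 t).Nonempty := ⟨X 0 ω, 0, ⟨le_refl _, ht.le⟩, rfl⟩
      obtain ⟨y, ⟨u, hu, rfl⟩, hy⟩ := exists_lt_of_lt_csSup hne
        (show ovX X t ω - ε < sSup ((fun s => X s ω) '' Icc 0 t) from by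
          have : ovX X t ω = sSup ((fun s => X s ω) '' Icc 0 t) := rfl
          linarith [this])
      refine le_trans (iInf_le (fun u : Icc (0:ℝ) t =>
        ⨆ v : {v : ℝ // (u:ℝ) ≤ v}, ((X v.1 ω - X u.1 ω : ℝ) : EReal)) ⟨u, hu⟩) ?_
      refine iSup_le ?_
      rintro ⟨w, hw⟩
      rw [EReal.coe_le_coe_iff]
      rcases le_total w t with h1 | h1
      · have := hfle w ⟨le_trans hu.1 hw, h1⟩
        linarith
      · have := hv w h1
        linarith
    exact absurd h (not_lt.mpr hle)
  · intro h
    rw [lt_iSup_iff] at h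
    obtain ⟨⟨v, hvt⟩, hlt⟩ := h
    rw [EReal.coe_lt_coe_iff] at hlt
    rw [hd] at hlt
    have hxv : x + ovX X t ω < X v ω := by linarith
    have hbound : ((X v ω - ovX X t ω : ℝ) : EReal)
        ≤ ⨅ u : Icc (0:ℝ) t, ⨆ v : {v : ℝ // (u:ℝ) ≤ v}, ((X v.1 ω - X u.1 ω : ℝ) : EReal) := by
      refine le_iInf ?_
      rintro ⟨u, hu⟩
      refine le_trans ?_
        (le_iSup (fun w : {w : ℝ // (u:ℝ) ≤ w} => ((X w.1 ω - X u ω : ℝ) : EReal)) ⟨v, le_trans hu.2 hvt⟩)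
      rw [EReal.coe_le_coe_iff]
      have := hfle u hu
      linarith
    exact lt_of_lt_of_le (by rw [EReal.coe_lt_coe_iff]; linarith) hbound

lemma measurable_A (hX : IsLevyProcess P X) (t : ℝ) :
    Measurable (fun ω => (fun s : ℝ => X (t + max s 0) ω - X t ω)) :=
  measurable_pi_iff.mpr fun s => (hX.measurable _).sub (hX.measurable t)

lemma measurable_B (hX : IsLevyProcess P X) (t : ℝ) :
    Measurable (fun ω => (fun u : Icc (0:ℝ) t => X u ω)) :=
  measurable_pi_iff.mpr fun u => hX.measurable _

lemma measurable_path0 (hX : IsLevyProcess P X) :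
    Measurable (fun ω => (fun s : ℝ => X (max s 0) ω)) :=
  measurable_pi_iff.mpr fun s => hX.measurable _

lemma map_tail_eq (hX : IsLevyProcess P X) {t : ℝ} (ht : 0 ≤ t) (c : EReal) :
    P {ω | c < futSupE X t ω} = P {ω | c < MSup X ω} := by
  have hset : MeasurableSet {z : ℝ → ℝ | c < Fq z} :=
    measurableSet_lt measurable_const measurable_Fq
  have h1 : {ω | c < futSupE X t ω}
      = (fun ω => (fun s : ℝ => X (t + max s 0) ω - X t ω)) ⁻¹' {z | c < Fq z} := by
    ext ω
    simp only [mem_setOf_eq, mem_preimage]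
    rw [Fq_shift hX ht ω]
  have h2 : {ω | c < MSup X ω}
      = (fun ω => (fun s : ℝ => X (max s 0) ω)) ⁻¹' {z | c < Fq z} := by
    ext ω
    simp only [mem_setOf_eq, mem_preimage]
    rw [Fq_path hX ω]
  rw [h1, h2, ← Measure.map_apply (measurable_A hX t) hset,
    ← Measure.map_apply (measurable_path0 hX) hset, hX.stat_incr t ht]

/-- The tail function of `M` (as an `ℝ≥0∞`-valued function). -/
def RR (P : Measure Ω) (X : ℝ → Ω → ℝ) : ℝ → ENNReal := fun y => P {ω | (y : EReal) < MSup X ω}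

lemma RR_antitone : Antitone (RR P X) := fun y y' h =>
  measure_mono fun ω hω => lt_of_le_of_lt (EReal.coe_le_coe_iff.mpr h) hω

lemma RR_meas : Measurable (RR P X) := RR_antitone.measurable

/-- The drawdown as a functional of the stopped path. -/
def GG (t : ℝ) (ht : 0 < t) : (Icc (0:ℝ) t → ℝ) → ℝ := fun y =>
  (⨆ N : ℕ, ⨆ k : Fin (2 ^ N + 1), y ⟨grid t N k, grid_mem ht N k⟩)
    - y ⟨t, right_mem_Icc.mpr ht.le⟩

lemma measurable_GG {t : ℝ} (ht : 0 < t) : Measurable (GG t ht) := by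
  unfold GG
  have h1 : Measurable fun y : Icc (0:ℝ) t → ℝ =>
      ⨆ N : ℕ, ⨆ k : Fin (2 ^ N + 1), y ⟨grid t N k, grid_mem ht N k⟩ :=
    Measurable.iSup fun N => Measurable.iSup fun k => measurable_pi_apply _
  have h2 : Measurable fun y : Icc (0:ℝ) t → ℝ => y ⟨t, right_mem_Icc.mpr ht.le⟩ :=
    measurable_pi_apply _
  exact h1.sub h2

lemma GG_spec (hX : IsLevyProcess P X) {t : ℝ} (ht : 0 < t) (ω : Ω) :
    GG t ht (fun u : Icc (0:ℝ) t => X u ω) = drawdown X t ω := by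
  show (⨆ N : ℕ, ⨆ k : Fin (2 ^ N + 1), X (grid t N k) ω) - X t ω = drawdown X t ω
  unfold drawdown
  rw [ovX_eq_iSup_dmax hX ω ht]
  rfl

lemma numerator_eq (hX : IsLevyProcess P X) {t : ℝ} (ht : 0 < t) (x : ℝ) :
    P {ω | ((x + drawdown X t ω : ℝ) : EReal) < futSupE X t ω}
      = ∫⁻ ω, RR P X (x + drawdown X t ω) ∂P := by
  have hmA : Measurable (fun ω => Fq (fun s : ℝ => X (t + max s 0) ω - X t ω)) :=
    measurable_Fq.comp (measurable_A hX t)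
  have hmB : Measurable (fun ω => GG t ht (fun u : Icc (0:ℝ) t => X u ω)) :=
    (measurable_GG ht).comp (measurable_B hX t)
  have hindep : IndepFun (fun ω => GG t ht (fun u : Icc (0:ℝ) t => X u ω))
      (fun ω => Fq (fun s : ℝ => X (t + max s 0) ω - X t ω)) P :=
    ((hX.indep_incr t ht.le).comp measurable_Fq (measurable_GG ht)).symm
  have hjoint := (indepFun_iff_map_prod_eq_prod_map_map hmB.aemeasurable hmA.aemeasurable).mp hindep
  have hS : MeasurableSet {p : ℝ × EReal | ((x + p.1 : ℝ) : EReal) < p.2} :=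
    measurableSet_lt ((measurable_fst.const_add x).coe_real_ereal) measurable_snd
  have h1 : {ω | ((x + drawdown X t ω : ℝ) : EReal) < futSupE X t ω}
      = (fun ω => (GG t ht (fun u : Icc (0:ℝ) t => X u ω),
          Fq (fun s : ℝ => X (t + max s 0) ω - X t ω)))
        ⁻¹' {p : ℝ × EReal | ((x + p.1 : ℝ) : EReal) < p.2} := by
    ext ω
    simp only [mem_setOf_eq, mem_preimage]
    rw [GG_spec hX ht ω, Fq_shift hX ht.le ω]
  rw [h1, ← Measure.map_apply (hmB.prodMk hmA) hS, hjoint, Measure.prod_apply hS]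
  have hslice : ∀ d : ℝ,
      (P.map (fun ω => Fq (fun s : ℝ => X (t + max s 0) ω - X t ω)))
        (Prod.mk d ⁻¹' {p : ℝ × EReal | ((x + p.1 : ℝ) : EReal) < p.2}) = RR P X (x + d) := by
    intro d
    have hset : (Prod.mk d ⁻¹' {p : ℝ × EReal | ((x + p.1 : ℝ) : EReal) < p.2})
        = {e : EReal | ((x + d : ℝ) : EReal) < e} := rfl
    have hsetm : MeasurableSet {e : EReal | ((x + d : ℝ) : EReal) < e} :=
      measurableSet_lt measurable_const measurable_id
    rw [hset, Measure.map_apply hmA hsetm]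
    have h2 : (fun ω => Fq (fun s : ℝ => X (t + max s 0) ω - X t ω))
        ⁻¹' {e : EReal | ((x + d : ℝ) : EReal) < e}
        = {ω | ((x + d : ℝ) : EReal) < futSupE X t ω} := by
      ext ω
      simp only [mem_preimage, mem_setOf_eq]
      rw [Fq_shift hX ht.le ω]
    rw [h2, map_tail_eq hX ht.le]
    rfl
  simp_rw [hslice]
  have hmf : Measurable (fun d : ℝ => RR P X (x + d)) :=
    (RR_meas (P := P) (X := X)).comp (measurable_const_add x)
  rw [lintegral_map hmf hmB]
  exact lintegral_congr fun ω => by rw [GG_spec hX ht ω]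

end Levy

end HTAux
namespace HTAux

section Duality

variable {Ω : Type*} [MeasurableSpace Ω] {P : Measure Ω} [IsProbabilityMeasure P]
  {X : ℝ → Ω → ℝ}

/-- Vector of increments of `X` along the grid `a`. -/
def incVec (X : ℝ → Ω → ℝ) {m : ℕ} (a : Fin (m+1) → ℝ) : Ω → (Fin m → ℝ) :=
  fun ω i => X (a i.succ) ω - X (a i.castSucc) ω

lemma measurable_incVec (hX : IsLevyProcess P X) {m : ℕ} (a : Fin (m+1) → ℝ) :
    Measurable (incVec X a) :=
  measurable_pi_iff.mpr fun _ => (hX.measurable _).sub (hX.measurable _)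

lemma map_equiv_cancel {α β : Type*} [MeasurableSpace α] [MeasurableSpace β]
    {μ κ : Measure α} (e : α ≃ᵐ β) (h : μ.map e = κ.map e) : μ = κ := by
  have h1 : ∀ ν : Measure α, (ν.map e).map e.symm = ν := fun ν => by
    rw [Measure.map_map e.symm.measurable e.measurable, MeasurableEquiv.symm_comp_self,
      Measure.map_id]
  rw [← h1 μ, h, h1]

/-- The law of the increment vector along a monotone grid starting at `0` is the product of
the laws of `X` at the gap lengths. -/
theorem incLaw (hX : IsLevyProcess P X) :
    ∀ (m : ℕ) (a : Fin (m+1) → ℝ), Monotone a → a 0 = 0 →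
      P.map (incVec X a)
        = Measure.pi (fun i : Fin m => P.map (X (a i.succ - a i.castSucc))) := by
  intro m
  induction m with
  | zero =>
    intro a _ _
    haveI h2 : ∀ i : Fin 0, IsProbabilityMeasure (P.map (X (a i.succ - a i.castSucc))) :=
      fun i => i.elim0
    haveI h1 : IsProbabilityMeasure (P.map (incVec X a)) :=
      Measure.isProbabilityMeasure_map (measurable_incVec hX a).aemeasurable
    haveI h3 : IsProbabilityMeasure
        (Measure.pi (fun i : Fin 0 => P.map (X (a i.succ - a i.castSucc)))) := inferInstance
    ext s _
    rcases s.eq_empty_or_nonempty with rfl | ⟨z, hz⟩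
    · simp
    · have hsu : s = univ := eq_univ_of_forall fun y => by rwa [Subsingleton.elim y z]
      rw [hsu, measure_univ, measure_univ]
  | succ m IH =>
    intro a hmono h0
    set J : Fin (m+2) := Fin.castSucc (Fin.last m) with hJ
    set T := a J with hTdef
    have hT0 : 0 ≤ T := by rw [hTdef, ← h0]; exact hmono (Fin.zero_le J)
    set s0 := a (Fin.last (m+1)) - T with hs0def
    have hs0 : 0 ≤ s0 := sub_nonneg.mpr (hmono (Fin.le_last _))
    set b : Fin (m+1) → ℝ := fun i => a i.castSucc with hb
    have hbmono : Monotone b := fun i j hij => hmono (by simpa using hij)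
    have hb0 : b 0 = 0 := by simpa [hb] using h0
    set lastF : Ω → ℝ := fun ω => X (a (Fin.last (m+1))) ω - X T ω with hlastF
    have hmlast : Measurable lastF := (hX.measurable _).sub (hX.measurable _)
    have hTs0 : T + s0 = a (Fin.last (m+1)) := by rw [hs0def]; ring
    have hevF : ((fun z : ℝ → ℝ => z s0)
        ∘ (fun ω => (fun s : ℝ => X (T + max s 0) ω - X T ω))) = lastF := by
      funext ω
      show X (T + max s0 0) ω - X T ω = lastF ω
      rw [max_eq_left hs0, hTs0]
    have hlastlaw : P.map lastF = P.map (X s0) := by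
      rw [← hevF, ← Measure.map_map (measurable_pi_apply s0) (measurable_A hX T),
        hX.stat_incr T hT0, Measure.map_map (measurable_pi_apply s0) (measurable_path0 hX)]
      have h4 : ((fun z : ℝ → ℝ => z s0) ∘ (fun ω => (fun s : ℝ => X (max s 0) ω))) = X s0 := by
        funext ω
        show X (max s0 0) ω = X s0 ω
        rw [max_eq_left hs0]
      rw [h4]
    have hmembi : ∀ i : Fin (m+1), b i ∈ Icc (0:ℝ) T := fun i =>
      ⟨by rw [← h0]; exact hmono (Fin.zero_le _),
       hmono (Fin.castSucc_le_castSucc_iff.mpr (Fin.le_last i))⟩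
    set gB : (Icc (0:ℝ) T → ℝ) → (Fin m → ℝ) := fun y i =>
      y ⟨b i.succ, hmembi i.succ⟩ - y ⟨b i.castSucc, hmembi i.castSucc⟩ with hgB
    have hmgB : Measurable gB := measurable_pi_iff.mpr fun i =>
      (measurable_pi_apply _).sub (measurable_pi_apply _)
    have hindep : IndepFun lastF (incVec X b) P := by
      have h1 := (hX.indep_incr T hT0).comp (measurable_pi_apply s0) hmgB
      rw [hevF] at h1
      have hBcomp : (gB ∘ (fun ω => (fun u : Icc (0:ℝ) T => X u ω))) = incVec X b := rfl
      rw [hBcomp] at h1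
      exact h1
    have hminc : Measurable (incVec X b) := measurable_incVec hX b
    have hjoint :=
      (indepFun_iff_map_prod_eq_prod_map_map hmlast.aemeasurable hminc.aemeasurable).mp hindep
    set ν : Fin (m+1) → Measure ℝ := fun i => P.map (X (a i.succ - a i.castSucc)) with hν
    haveI : ∀ i, IsProbabilityMeasure (ν i) :=
      fun i => Measure.isProbabilityMeasure_map (hX.measurable _).aemeasurable
    haveI : ∀ i : Fin m, IsProbabilityMeasure (P.map (X (b i.succ - b i.castSucc))) :=
      fun i => Measure.isProbabilityMeasure_map (hX.measurable _).aemeasurable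
    set e := MeasurableEquiv.piFinSuccAbove (fun _ : Fin (m+1) => ℝ) (Fin.last m) with he
    have hkey : (⇑e) ∘ (incVec X a) = fun ω => (lastF ω, incVec X b ω) := by
      funext ω
      show e (incVec X a ω) = (lastF ω, incVec X b ω)
      have happ : e (incVec X a ω) = (incVec X a ω (Fin.last m),
          fun j : Fin m => incVec X a ω ((Fin.last m).succAbove j)) := rfl
      rw [happ]
      have hfst : incVec X a ω (Fin.last m) = lastF ω := by
        show X (a (Fin.last m).succ) ω - X (a (Fin.last m).castSucc) ω = lastF ω
        rw [Fin.succ_last]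
      have hsnd : (fun j : Fin m => incVec X a ω ((Fin.last m).succAbove j)) = incVec X b ω := by
        funext j
        rw [Fin.succAbove_last]
        show X (a (Fin.castSucc j).succ) ω - X (a (Fin.castSucc j).castSucc) ω
          = X (a (Fin.castSucc j.succ)) ω - X (a (Fin.castSucc j.castSucc)) ω
        rw [Fin.succ_castSucc]
      rw [hfst, hsnd]
      
    have hmp := measurePreserving_piFinSuccAbove ν (Fin.last m)
    have hν_last : ν (Fin.last m) = P.map lastF := by
      rw [hlastlaw, hν]
      show P.map (X (a (Fin.last m).succ - a (Fin.last m).castSucc)) = P.map (X s0)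
      rw [Fin.succ_last, hs0def, hTdef, hJ]
    have hν_rest : (fun j : Fin m => ν ((Fin.last m).succAbove j))
        = fun i : Fin m => P.map (X (b i.succ - b i.castSucc)) := by
      funext j
      rw [Fin.succAbove_last, hν]
      show P.map (X (a (Fin.castSucc j).succ - a (Fin.castSucc j).castSucc))
        = P.map (X (b j.succ - b j.castSucc))
      rw [Fin.succ_castSucc]
    apply map_equiv_cancel e
    calc (P.map (incVec X a)).map e
        = P.map ((⇑e) ∘ (incVec X a)) :=
          Measure.map_map e.measurable (measurable_incVec hX a)
      _ = P.map (fun ω => (lastF ω, incVec X b ω)) := by rw [hkey]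
      _ = (P.map lastF).prod (P.map (incVec X b)) := hjoint
      _ = (ν (Fin.last m)).prod (Measure.pi (fun j : Fin m => ν ((Fin.last m).succAbove j))) := by
          rw [hν_last, hν_rest, IH b hbmono hb0]
      _ = (Measure.pi ν).map e := hmp.map_eq.symm

/-- Partial-sum map. -/
def PS {m : ℕ} : (Fin m → ℝ) → (Fin (m+1) → ℝ) := fun y k =>
  ∑ i : Fin m, if (i : ℕ) < (k : ℕ) then y i else 0

lemma measurable_PS {m : ℕ} : Measurable (PS (m := m)) :=
  measurable_pi_iff.mpr fun k => Finset.measurable_sum _ fun i _ => by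
    by_cases h : (i : ℕ) < (k : ℕ) <;> simp [h]
    · exact measurable_pi_apply i

lemma sum_ite_lt {m : ℕ} (y : Fin m → ℝ) (ybar : ℕ → ℝ)
    (hy : ∀ i : Fin m, ybar (i : ℕ) = y i) :
    ∀ K : ℕ, K ≤ m →
      (∑ i : Fin m, if (i : ℕ) < K then y i else 0) = ∑ i ∈ Finset.range K, ybar i := by
  intro K
  induction K with
  | zero => intro _; simp
  | succ K ih =>
    intro hK
    have hKm : K < m := by omega
    rw [Finset.sum_range_succ, ← ih (by omega)]
    have hsplit : ∀ i : Fin m, (if (i : ℕ) < K + 1 then y i else 0)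
        = (if (i : ℕ) < K then y i else 0) + (if i = ⟨K, hKm⟩ then y i else 0) := by
      intro i
      by_cases h1 : (i : ℕ) < K
      · have h2 : (i : ℕ) < K + 1 := by omega
        have h3 : i ≠ ⟨K, hKm⟩ := by
          intro hh
          rw [hh] at h1
          simp at h1
        simp [h1, h2, h3]
      · by_cases h2 : (i : ℕ) = K
        · have h3 : i = ⟨K, hKm⟩ := Fin.ext h2
          have h4 : (i : ℕ) < K + 1 := by omega
          simp [h1, h3, h4]
        · have h3 : ¬ (i : ℕ) < K + 1 := by omega
          have h4 : i ≠ ⟨K, hKm⟩ := fun hh => h2 (by rw [hh])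
          simp [h1, h3, h4]
    rw [Finset.sum_congr rfl fun i _ => hsplit i, Finset.sum_add_distrib,
      Finset.sum_ite_eq' Finset.univ (⟨K, hKm⟩ : Fin m) y]
    simp [hy ⟨K, hKm⟩]

lemma PS_incVec {m : ℕ} (a : Fin (m+1) → ℝ) (ω : Ω) (k : Fin (m+1)) :
    PS (incVec X a ω) k = X (a k) ω - X (a 0) ω := by
  set F : ℕ → ℝ := fun j => X (a ⟨min j m, by omega⟩) ω with hF
  have hy : ∀ i : Fin m, F ((i : ℕ) + 1) - F (i : ℕ) = incVec X a ω i := by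
    intro i
    have hlt := i.isLt
    have h1 : (⟨min ((i : ℕ) + 1) m, by omega⟩ : Fin (m+1)) = i.succ :=
      Fin.ext (by simp only [Fin.val_succ]; omega)
    have h2 : (⟨min (i : ℕ) m, by omega⟩ : Fin (m+1)) = i.castSucc :=
      Fin.ext (by simp only [Fin.coe_castSucc]; omega)
    show X (a ⟨min ((i : ℕ) + 1) m, _⟩) ω - X (a ⟨min (i : ℕ) m, _⟩) ω = _
    rw [h1, h2]
    rfl
  have h3 := sum_ite_lt (incVec X a ω) (fun i => F (i + 1) - F i) hy (k : ℕ) (by omega)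
  show (∑ i : Fin m, if (i : ℕ) < (k : ℕ) then incVec X a ω i else 0) = _
  rw [h3, Finset.sum_range_sub]
  have h4 : F (k : ℕ) = X (a k) ω := by
    show X (a ⟨min (k : ℕ) m, _⟩) ω = X (a k) ω
    congr 1
    exact congrArg a (Fin.ext (by have := k.isLt; simp only []; omega))
  have h5 : F 0 = X (a 0) ω := by
    show X (a ⟨min 0 m, _⟩) ω = X (a 0) ω
    congr 1
  rw [h4, h5]

lemma PS_incVec_rev {m : ℕ} (a : Fin (m+1) → ℝ) (ω : Ω) (k : Fin (m+1)) :
    PS (incVec X a ω ∘ Fin.rev) k = X (a (Fin.last m)) ω - X (a k.rev) ω := by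
  set G : ℕ → ℝ := fun j => X (a ⟨m - min j m, by omega⟩) ω with hG
  have hy : ∀ i : Fin m, G (i : ℕ) - G ((i : ℕ) + 1) = (incVec X a ω ∘ Fin.rev) i := by
    intro i
    have hlt := i.isLt
    have h1 : (⟨m - min (i : ℕ) m, by omega⟩ : Fin (m+1)) = (Fin.rev i).succ :=
      Fin.ext (by simp only [Fin.val_succ, Fin.val_rev]; omega)
    have h2 : (⟨m - min ((i : ℕ) + 1) m, by omega⟩ : Fin (m+1)) = (Fin.rev i).castSucc :=
      Fin.ext (by simp only [Fin.coe_castSucc, Fin.val_rev]; omega)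
    show X (a ⟨m - min (i : ℕ) m, _⟩) ω - X (a ⟨m - min ((i : ℕ) + 1) m, _⟩) ω = _
    rw [h1, h2]
    rfl
  have h3 := sum_ite_lt (incVec X a ω ∘ Fin.rev) (fun i => G i - G (i + 1)) hy (k : ℕ) (by omega)
  show (∑ i : Fin m, if (i : ℕ) < (k : ℕ) then (incVec X a ω ∘ Fin.rev) i else 0) = _
  rw [h3, Finset.sum_range_sub']
  have h4 : G 0 = X (a (Fin.last m)) ω := by
    show X (a ⟨m - min 0 m, _⟩) ω = X (a (Fin.last m)) ω
    congr 1
  have h5 : G (k : ℕ) = X (a k.rev) ω := by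
    show X (a ⟨m - min (k : ℕ) m, _⟩) ω = X (a k.rev) ω
    congr 1
    refine congrArg a (Fin.ext ?_)
    have := k.isLt
    simp only [Fin.val_rev]
    omega
  rw [h4, h5]

lemma map_rev_pi {m : ℕ} (μ0 : Measure ℝ) [IsProbabilityMeasure μ0] :
    (Measure.pi (fun _ : Fin m => μ0)).map (fun y : Fin m → ℝ => y ∘ Fin.rev)
      = Measure.pi (fun _ : Fin m => μ0) := by
  have hmeas : Measurable (fun y : Fin m → ℝ => y ∘ Fin.rev) :=
    measurable_pi_iff.mpr fun i => measurable_pi_apply _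
  refine (Measure.pi_eq fun s hs => ?_).symm
  rw [Measure.map_apply hmeas (MeasurableSet.univ_pi hs)]
  have hpre : (fun y : Fin m → ℝ => y ∘ Fin.rev) ⁻¹' (univ.pi s)
      = univ.pi (fun i => s i.rev) := by
    ext y
    simp only [mem_preimage, Set.mem_pi, mem_univ, true_implies]
    constructor
    · intro h i
      simpa [Function.comp, Fin.rev_rev] using h i.rev
    · intro h i
      simpa [Function.comp, Fin.rev_rev] using h i.rev
  rw [hpre, Measure.pi_pi]
  exact Fintype.prod_equiv Fin.revPerm (fun i => μ0 (s i.rev)) (fun i => μ0 (s i))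
    (fun i => by simp [Fin.revPerm])

lemma ciSup_const_sub {ι : Type*} [Nonempty ι] [Finite ι] (c : ℝ) (g : ι → ℝ) :
    (⨆ i, (c - g i)) = c - ⨅ i, g i := by
  obtain ⟨i0, hi0⟩ := Finite.exists_min g
  have hinf : (⨅ i, g i) = g i0 :=
    le_antisymm (ciInf_le (Set.Finite.bddBelow (finite_range g)) i0) (le_ciInf hi0)
  rw [hinf]
  apply le_antisymm
  · exact ciSup_le fun i => by have := hi0 i; linarith
  · exact le_ciSup (Set.Finite.bddAbove (finite_range fun i => c - g i)) i0

lemma ciInf_rev {m : ℕ} (g : Fin (m+1) → ℝ) :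
    (⨅ k : Fin (m+1), g k.rev) = ⨅ k, g k := by
  apply le_antisymm
  · refine le_ciInf fun k => ?_
    have h1 := ciInf_le (Set.Finite.bddBelow (finite_range fun j : Fin (m+1) => g j.rev)) k.rev
    simpa [Fin.rev_rev] using h1
  · exact le_ciInf fun k => ciInf_le (Set.Finite.bddBelow (finite_range g)) k.rev

lemma grid_monotone {t : ℝ} (ht : 0 < t) (N : ℕ) : Monotone (grid t N) := by
  intro k k' h
  unfold grid
  have h2 : (0:ℝ) < 2 ^ N := by positivity
  have hn : (k : ℕ) ≤ (k' : ℕ) := h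
  have hr : (k : ℝ) ≤ (k' : ℝ) := by exact_mod_cast hn
  rw [div_le_div_iff₀ h2 h2]
  exact mul_le_mul_of_nonneg_right (mul_le_mul_of_nonneg_left hr ht.le) h2.le

lemma grid_succ_sub {t : ℝ} (N : ℕ) (i : Fin (2 ^ N)) :
    grid t N i.succ - grid t N i.castSucc = t / 2 ^ N := by
  unfold grid
  have h1 : ((i.succ : Fin (2 ^ N + 1)) : ℕ) = (i : ℕ) + 1 := rfl
  have h2 : ((i.castSucc : Fin (2 ^ N + 1)) : ℕ) = (i : ℕ) := rfl
  rw [h1, h2]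
  push_cast
  field_simp
  ring

/-- Reversal identity in law for the dyadic skeleton. -/
lemma dyadic_law (hX : IsLevyProcess P X) {t : ℝ} (ht : 0 < t) (N : ℕ) :
    P.map (fun ω => (fun k : Fin (2 ^ N + 1) => X (grid t N k) ω))
      = P.map (fun ω => (fun k : Fin (2 ^ N + 1) => X t ω - X (grid t N k.rev) ω)) := by
  have hmono : Monotone (grid t N) := grid_monotone ht N
  have h0 : grid t N 0 = 0 := grid_zero t N
  have hLaw := incLaw hX (2 ^ N) (grid t N) hmono h0
  have hνconst : (fun i : Fin (2 ^ N) =>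
      P.map (X (grid t N i.succ - grid t N i.castSucc))) = fun _ => P.map (X (t / 2 ^ N)) :=
    funext fun i => by rw [grid_succ_sub]
  haveI : IsProbabilityMeasure (P.map (X (t / 2 ^ N))) :=
    Measure.isProbabilityMeasure_map (hX.measurable _).aemeasurable
  have hminc : Measurable (incVec X (grid t N)) := measurable_incVec hX (grid t N)
  have hV1 : (fun ω => (fun k : Fin (2 ^ N + 1) => X (grid t N k) ω))
      = fun ω => PS (incVec X (grid t N) ω) := by
    funext ω k
    rw [PS_incVec, h0, hX.init ω, sub_zero]
  have hV2 : (fun ω => (fun k : Fin (2 ^ N + 1) => X t ω - X (grid t N k.rev) ω))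
      = fun ω => PS (incVec X (grid t N) ω ∘ Fin.rev) := by
    funext ω k
    rw [PS_incVec_rev, grid_last]
  have hmrev : Measurable (fun y : Fin (2 ^ N) → ℝ => y ∘ Fin.rev) :=
    measurable_pi_iff.mpr fun i => measurable_pi_apply _
  rw [hV1, hV2]
  calc P.map (fun ω => PS (incVec X (grid t N) ω))
      = (P.map (incVec X (grid t N))).map PS :=
        (Measure.map_map measurable_PS hminc).symm
    _ = (Measure.pi fun _ : Fin (2 ^ N) => P.map (X (t / 2 ^ N))).map PS := by
        rw [hLaw, hνconst]
    _ = ((Measure.pi fun _ : Fin (2 ^ N) => P.map (X (t / 2 ^ N))).map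
          (fun y : Fin (2 ^ N) → ℝ => y ∘ Fin.rev)).map PS := by
        rw [map_rev_pi]
    _ = (Measure.pi fun _ : Fin (2 ^ N) => P.map (X (t / 2 ^ N))).map
          (PS ∘ (fun y : Fin (2 ^ N) → ℝ => y ∘ Fin.rev)) :=
        Measure.map_map measurable_PS hmrev
    _ = (P.map (incVec X (grid t N))).map (PS ∘ (fun y : Fin (2 ^ N) → ℝ => y ∘ Fin.rev)) := by
        rw [hLaw, hνconst]
    _ = P.map ((PS ∘ (fun y : Fin (2 ^ N) → ℝ => y ∘ Fin.rev)) ∘ incVec X (grid t N)) :=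
        Measure.map_map (measurable_PS.comp hmrev) hminc
    _ = P.map (fun ω => PS (incVec X (grid t N) ω ∘ Fin.rev)) := rfl

/-- Exponential functional used for the duality argument. -/
def expPhi (α : ℝ) {n : ℕ} : (Fin (n+1) → ℝ) → ℝ := fun y =>
  Real.exp (-α * ((⨆ k, y k) - y (Fin.last n)))

lemma measurable_expPhi (α : ℝ) {n : ℕ} : Measurable (expPhi α (n := n)) := by
  unfold expPhi
  apply Real.measurable_exp.comp
  exact ((Measurable.iSup fun k => measurable_pi_apply k).sub
    (measurable_pi_apply _)).const_mul (-α)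

set_option maxHeartbeats 1000000 in
/-- Per-level identity between the two exponential functionals. -/
lemma EN_eq (hX : IsLevyProcess P X) {t : ℝ} (ht : 0 < t) (α : ℝ) (N : ℕ) :
    ∫ ω, Real.exp (-α * (dmax (fun s => X s ω) t N - X t ω)) ∂P
      = ∫ ω, Real.exp (α * dmin (fun s => X s ω) t N) ∂P := by
  have hmΦ : Measurable (expPhi α (n := 2 ^ N)) := measurable_expPhi α
  have hm1 : Measurable (fun ω => (fun k : Fin (2 ^ N + 1) => X (grid t N k) ω)) :=
    measurable_pi_iff.mpr fun k => hX.measurable _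
  have hm2 : Measurable (fun ω => (fun k : Fin (2 ^ N + 1) => X t ω - X (grid t N k.rev) ω)) :=
    measurable_pi_iff.mpr fun k => (hX.measurable _).sub (hX.measurable _)
  have h1 : ∀ ω, Real.exp (-α * (dmax (fun s => X s ω) t N - X t ω))
      = expPhi α (fun k => X (grid t N k) ω) := by
    intro ω
    show _ = Real.exp (-α * ((⨆ k : Fin (2 ^ N + 1), X (grid t N k) ω)
      - X (grid t N (Fin.last (2 ^ N))) ω))
    rw [grid_last]
    rfl
  have h2 : ∀ ω, expPhi α (fun k => X t ω - X (grid t N k.rev) ω)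
      = Real.exp (α * dmin (fun s => X s ω) t N) := by
    intro ω
    show Real.exp (-α * ((⨆ k : Fin (2 ^ N + 1), (X t ω - X (grid t N k.rev) ω))
        - (X t ω - X (grid t N (Fin.last (2 ^ N)).rev) ω))) = _
    rw [Fin.rev_last, grid_zero, hX.init ω, sub_zero]
    have h3 : (⨆ k : Fin (2 ^ N + 1), (X t ω - X (grid t N k.rev) ω))
        = X t ω - ⨅ k : Fin (2 ^ N + 1), X (grid t N k.rev) ω :=
      ciSup_const_sub (ι := Fin (2 ^ N + 1)) (X t ω) (fun k => X (grid t N k.rev) ω)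
    have h4 : (⨅ k : Fin (2 ^ N + 1), X (grid t N k.rev) ω)
        = ⨅ k : Fin (2 ^ N + 1), X (grid t N k) ω := ciInf_rev (m := 2 ^ N) (fun k => X (grid t N k) ω)
    rw [h3, h4]
    show Real.exp (-α * (X t ω - (⨅ k, X (grid t N k) ω) - X t ω)) = _
    congr 1
    unfold dmin
    ring
  calc ∫ ω, Real.exp (-α * (dmax (fun s => X s ω) t N - X t ω)) ∂P
      = ∫ ω, expPhi α (fun k => X (grid t N k) ω) ∂P :=
        integral_congr_ae (ae_of_all _ h1)
    _ = ∫ y, expPhi α y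
          ∂(P.map (fun ω => (fun k : Fin (2 ^ N + 1) => X (grid t N k) ω))) :=
        (integral_map hm1.aemeasurable hmΦ.aestronglyMeasurable).symm
    _ = ∫ y, expPhi α y
          ∂(P.map (fun ω => (fun k : Fin (2 ^ N + 1) => X t ω - X (grid t N k.rev) ω))) := by
        rw [dyadic_law hX ht N]
    _ = ∫ ω, expPhi α (fun k => X t ω - X (grid t N k.rev) ω) ∂P :=
        integral_map hm2.aemeasurable hmΦ.aestronglyMeasurable
    _ = ∫ ω, Real.exp (α * dmin (fun s => X s ω) t N) ∂P :=
        integral_congr_ae (ae_of_all _ h2)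

end Duality

end HTAux
namespace HTAux

section Main

variable {Ω : Type*} [MeasurableSpace Ω] {P : Measure Ω} [IsProbabilityMeasure P]
  {X : ℝ → Ω → ℝ}

lemma duality (hX : IsLevyProcess P X) {t : ℝ} (ht : 0 < t) {α : ℝ} (hα : 0 < α) :
    ∫ ω, Real.exp (-α * drawdown X t ω) ∂P = ∫ ω, Real.exp (α * unX X t ω) ∂P := by
  have hL : Tendsto (fun N => ∫ ω, Real.exp (-α * (dmax (fun s => X s ω) t N - X t ω)) ∂P)
      atTop (nhds (∫ ω, Real.exp (-α * drawdown X t ω) ∂P)) := by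
    apply tendsto_integral_of_dominated_convergence (fun _ => (1:ℝ))
    · intro N
      exact (Real.measurable_exp.comp
        (((measurable_dmaxf hX t N).sub (hX.measurable t)).const_mul (-α))).aestronglyMeasurable
    · exact integrable_const 1
    · intro N
      refine ae_of_all _ fun ω => ?_
      rw [Real.norm_eq_abs, abs_of_pos (Real.exp_pos _)]
      have h1 : X t ω ≤ dmax (fun s => X s ω) t N := by
        have h2 := le_dmax (fun s => X s ω) t N (Fin.last _)
        rwa [grid_last] at h2
      calc Real.exp (-α * (dmax (fun s => X s ω) t N - X t ω)) ≤ Real.exp 0 :=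
            Real.exp_le_exp.mpr (by nlinarith)
        _ = 1 := Real.exp_zero
    · refine ae_of_all _ fun ω => ?_
      have h1 : Tendsto (fun N => dmax (fun s => X s ω) t N) atTop (nhds (ovX X t ω)) :=
        tendsto_dmax ht (fun s hs => hX.right_cont ω s hs) (bddAbove_path hX ω t)
      have h2 : Tendsto (fun N => -α * (dmax (fun s => X s ω) t N - X t ω)) atTop
          (nhds (-α * (ovX X t ω - X t ω))) := (h1.sub_const _).const_mul _
      exact (Real.continuous_exp.continuousAt.tendsto).comp h2
  have hR : Tendsto (fun N => ∫ ω, Real.exp (α * dmin (fun s => X s ω) t N) ∂P)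
      atTop (nhds (∫ ω, Real.exp (α * unX X t ω) ∂P)) := by
    apply tendsto_integral_of_dominated_convergence (fun _ => (1:ℝ))
    · intro N
      exact (Real.measurable_exp.comp
        ((measurable_dminf hX t N).const_mul α)).aestronglyMeasurable
    · exact integrable_const 1
    · intro N
      refine ae_of_all _ fun ω => ?_
      rw [Real.norm_eq_abs, abs_of_pos (Real.exp_pos _)]
      have h1 : dmin (fun s => X s ω) t N ≤ 0 := by
        have h2 := dmin_le (fun s => X s ω) t N 0
        rwa [grid_zero, hX.init ω] at h2
      calc Real.exp (α * dmin (fun s => X s ω) t N) ≤ Real.exp 0 :=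
            Real.exp_le_exp.mpr (by nlinarith)
        _ = 1 := Real.exp_zero
    · refine ae_of_all _ fun ω => ?_
      have h1 : Tendsto (fun N => dmin (fun s => X s ω) t N) atTop (nhds (unX X t ω)) :=
        tendsto_dmin ht (fun s hs => hX.right_cont ω s hs) (bddBelow_path hX ω t)
      have h2 : Tendsto (fun N => α * dmin (fun s => X s ω) t N) atTop
          (nhds (α * unX X t ω)) := h1.const_mul _
      exact (Real.continuous_exp.continuousAt.tendsto).comp h2
  have hEq : (fun N => ∫ ω, Real.exp (-α * (dmax (fun s => X s ω) t N - X t ω)) ∂P)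
      = fun N => ∫ ω, Real.exp (α * dmin (fun s => X s ω) t N) ∂P :=
    funext fun N => EN_eq hX ht α N
  rw [hEq] at hL
  exact tendsto_nhds_unique hL hR

lemma exp_drawdown_integrable (hX : IsLevyProcess P X) {t : ℝ} (ht : 0 < t) {α : ℝ}
    (hα : 0 < α) : Integrable (fun ω => Real.exp (-α * drawdown X t ω)) P := by
  have hm : Measurable (fun ω => Real.exp (-α * drawdown X t ω)) :=
    Real.measurable_exp.comp ((measurable_drawdown hX ht).const_mul (-α))
  refine Integrable.mono' (integrable_const 1) hm.aestronglyMeasurable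
    (ae_of_all _ fun ω => ?_)
  rw [Real.norm_eq_abs, abs_of_pos (Real.exp_pos _)]
  calc Real.exp (-α * drawdown X t ω) ≤ Real.exp 0 :=
        Real.exp_le_exp.mpr (by nlinarith [drawdown_nonneg hX ω ht.le])
    _ = 1 := Real.exp_zero

end Main

end HTAux
/-- **Heavy-tailed asymptotics of the running infimum of the future drawup**
(Theorem 4.1, second assertion): if `E[X_1] ∈ (-∞,0)` and the tail
`r(x) = P(M > x)` of `M = sup_{s≥0} X_s` is positive with
`r(x-y)/r(x) → e^{α y}` (class `L^{(α)}`), then for every `t > 0`,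
`P(\underline U^*_t > x)/r(x) → E[e^{-α D_t}] = E[e^{α \underline X_t}] ∈ (0,1]`. -/
theorem heavy_tail_asymptotics_unUStar
    {Ω : Type*} [MeasurableSpace Ω] (P : Measure Ω) [IsProbabilityMeasure P]
    (X : ℝ → Ω → ℝ) (hX : IsLevyProcess P X)
    (hint : Integrable (X 1) P) (hmean : ∫ ω, X 1 ω ∂P < 0)
    (α : ℝ) (hα : 0 < α)
    (hpos : ∀ x : ℝ, 0 ≤ x → 0 < (P {ω | (x : EReal) < MSup X ω}).toReal)
    (htail : ∀ y : ℝ, Filter.Tendsto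
      (fun x : ℝ => (P {ω | ((x - y : ℝ) : EReal) < MSup X ω}).toReal
        / (P {ω | (x : EReal) < MSup X ω}).toReal)
      Filter.atTop (nhds (Real.exp (α * y))))
    (t : ℝ) (ht : 0 < t) :
    (0 < ∫ ω, Real.exp (-α * drawdown X t ω) ∂P
      ∧ ∫ ω, Real.exp (-α * drawdown X t ω) ∂P ≤ 1) ∧
    (∫ ω, Real.exp (-α * drawdown X t ω) ∂P
      = ∫ ω, Real.exp (α * unX X t ω) ∂P) ∧
    Filter.Tendsto
      (fun x : ℝ => (P {ω | (x : EReal) < unUStarInf X t ω}).toReal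
        / (P {ω | (x : EReal) < MSup X ω}).toReal)
      Filter.atTop (nhds (∫ ω, Real.exp (-α * drawdown X t ω) ∂P)) := by
  have hint1 : Integrable (fun ω => Real.exp (-α * drawdown X t ω)) P :=
    HTAux.exp_drawdown_integrable hX ht hα
  refine ⟨⟨?_, ?_⟩, ?_, ?_⟩
  · -- positivity
    refine (integral_pos_iff_support_of_nonneg (fun ω => (Real.exp_pos _).le) hint1).mpr ?_
    have hsupp : Function.support (fun ω => Real.exp (-α * drawdown X t ω)) = univ :=
      eq_univ_of_forall fun ω => (Real.exp_pos _).ne'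
    rw [hsupp, measure_univ]
    exact zero_lt_one
  · -- at most one
    calc ∫ ω, Real.exp (-α * drawdown X t ω) ∂P ≤ ∫ _ω, (1:ℝ) ∂P := by
          refine integral_mono hint1 (integrable_const 1) fun ω => ?_
          calc Real.exp (-α * drawdown X t ω) ≤ Real.exp 0 :=
                Real.exp_le_exp.mpr (by nlinarith [HTAux.drawdown_nonneg hX ω ht.le])
            _ = 1 := Real.exp_zero
      _ = 1 := by simp
  · -- duality
    exact HTAux.duality hX ht hα
  · -- main asymptotics
    have hDm : Measurable (drawdown X t) := HTAux.measurable_drawdown hX ht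
    have key : ∀ x : ℝ, 0 < x →
        (P {ω | (x : EReal) < unUStarInf X t ω}).toReal
          = ∫ ω, (HTAux.RR P X (x + drawdown X t ω)).toReal ∂P := by
      intro x hx
      have hset : {ω | (x : EReal) < unUStarInf X t ω}
          = {ω | ((x + drawdown X t ω : ℝ) : EReal) < futSupE X t ω} :=
        Set.ext fun ω => HTAux.event_iff hX ht hx ω
      rw [hset, HTAux.numerator_eq hX ht x]
      refine (integral_toReal ?_ ?_).symm
      · exact ((HTAux.RR_meas (P := P) (X := X)).comp (hDm.const_add x)).aemeasurable
      · exact ae_of_all _ fun ω => measure_lt_top P _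
    have hmain : Tendsto (fun x : ℝ => ∫ ω, (HTAux.RR P X (x + drawdown X t ω)).toReal
          / (P {ω | (x : EReal) < MSup X ω}).toReal ∂P) atTop
        (nhds (∫ ω, Real.exp (-α * drawdown X t ω) ∂P)) := by
      refine tendsto_integral_filter_of_dominated_convergence (fun _ => (1:ℝ)) ?_ ?_ ?_ ?_
      · refine Eventually.of_forall fun x => ?_
        exact (((HTAux.RR_meas (P := P) (X := X)).comp
          (hDm.const_add x)).ennreal_toReal.div_const _).aestronglyMeasurable
      · filter_upwards [eventually_ge_atTop (0:ℝ)] with x hx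
        refine ae_of_all _ fun ω => ?_
        have h1 : HTAux.RR P X (x + drawdown X t ω) ≤ HTAux.RR P X x :=
          HTAux.RR_antitone (le_add_of_nonneg_right (HTAux.drawdown_nonneg hX ω ht.le))
        have h2 : (HTAux.RR P X (x + drawdown X t ω)).toReal
            ≤ (P {ω | (x : EReal) < MSup X ω}).toReal :=
          ENNReal.toReal_mono (measure_ne_top P _) h1
        have h3 : 0 < (P {ω | (x : EReal) < MSup X ω}).toReal := hpos x hx
        rw [Real.norm_eq_abs, abs_of_nonneg (div_nonneg ENNReal.toReal_nonneg h3.le)]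
        exact div_le_one_of_le₀ h2 h3.le
      · exact integrable_const 1
      · refine ae_of_all _ fun ω => ?_
        have h4 := htail (-(drawdown X t ω))
        simp only [sub_neg_eq_add] at h4
        have h5 : Real.exp (α * -(drawdown X t ω)) = Real.exp (-α * drawdown X t ω) := by
          ring_nf
        rw [h5] at h4
        exact h4
    have hEq : (fun x : ℝ => (P {ω | (x : EReal) < unUStarInf X t ω}).toReal
          / (P {ω | (x : EReal) < MSup X ω}).toReal)
        =ᶠ[atTop] (fun x : ℝ => ∫ ω, (HTAux.RR P X (x + drawdown X t ω)).toReal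
          / (P {ω | (x : EReal) < MSup X ω}).toReal ∂P) := by
      filter_upwards [eventually_gt_atTop (0:ℝ)] with x hx
      rw [key x hx, ← integral_div]
    exact hmain.congr' hEq.symm

end
end

section
/- Tail decomposition identity (equation (eq:asympp)). Assume E[max(X_1,0)] < ∞ and E[X_1] < 0 (mean possibly −∞), so that M = sup_{s≥0} X_s is finite almost surely, and write F(y) = P(M > y). Then for every t ≥ 0 and every x ≥ 0, P(\overline U^*_t > x) = P(\overline U_t > x) + E[ F(x − U_t) · 1{\overline U_t ≤ x} ]; equivalently, P(\overline U^*_t > x) = P(\overline U_t > x) + ∫_{[0,x]} P(M > x − z) P(U_t ∈ dz, \overline U_t ≤ x). -/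
open MeasureTheory ProbabilityTheory Filter Set

noncomputable section

variable {Ω : Type*} [MeasurableSpace Ω]

lemma ereal_add_iSup {ι : Sort*} [Nonempty ι] (c : ℝ) (f : ι → ℝ) :
    (⨆ i, ((c + f i : ℝ) : EReal)) = (c : EReal) + ⨆ i, ((f i : ℝ) : EReal) := by
  have key : ∀ (d : ℝ) (h : ι → ℝ), (⨆ i, ((d + h i : ℝ) : EReal)) ≤ (d : EReal) + ⨆ i, ((h i : ℝ) : EReal) := by
    intro d h
    refine iSup_le fun i => ?_
    rw [EReal.coe_add]
    exact add_le_add (le_refl _) (le_iSup (fun i => ((h i : ℝ) : EReal)) i)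
  refine le_antisymm (key c f) ?_
  have h2 : (⨆ i, ((f i : ℝ) : EReal)) ≤ ((-c : ℝ) : EReal) + ⨆ i, ((c + f i : ℝ) : EReal) := by
    have := key (-c) (fun i => c + f i)
    simpa using this
  calc (c : EReal) + (⨆ i, ((f i : ℝ) : EReal))
      ≤ (c : EReal) + (((-c : ℝ) : EReal) + ⨆ i, ((c + f i : ℝ) : EReal)) := add_le_add (le_refl _) h2
    _ = ((c : EReal) + ((-c : ℝ) : EReal)) + ⨆ i, ((c + f i : ℝ) : EReal) := (add_assoc _ _ _).symm
    _ = ⨆ i, ((c + f i : ℝ) : EReal) := by norm_cast; simp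

lemma sup_eq_sup_rat (g : ℝ → ℝ) (a : ℝ)
    (hr : ∀ v, a ≤ v → ContinuousWithinAt g (Ici v) v) :
    (⨆ v : {v : ℝ // a ≤ v}, ((g v : ℝ) : EReal))
      = ⨆ q : {q : ℚ // 0 ≤ q}, ((g (a + q) : ℝ) : EReal) := by
  have hne : Nonempty {q : ℚ // 0 ≤ q} := ⟨⟨0, le_rfl⟩⟩
  refine le_antisymm ?_ ?_
  · refine iSup_le fun v => ?_
    refine le_of_forall_lt fun c hc => ?_
    induction c with
    | bot =>
        refine lt_of_lt_of_le ?_ (le_iSup (fun q : {q : ℚ // 0 ≤ q} => ((g (a + q) : ℝ) : EReal)) ⟨0, le_rfl⟩)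
        exact EReal.bot_lt_coe _
    | coe r =>
        obtain ⟨v, hv⟩ := v
        rw [EReal.coe_lt_coe_iff] at hc
        have ht := hr v hv
        have hU : {u : ℝ | r < g u} ∈ nhdsWithin v (Ici v) :=
          ht (Ioi_mem_nhds hc)
        rw [mem_nhdsWithin] at hU
        obtain ⟨U, hUo, hvU, hsub⟩ := hU
        obtain ⟨δ, hδ, hball⟩ := Metric.isOpen_iff.1 hUo v hvU
        obtain ⟨q, hq1, hq2⟩ := exists_rat_btwn (show v - a < v - a + δ by linarith)
        have hq0 : (0:ℚ) ≤ q := by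
          have : (0:ℝ) ≤ (q:ℝ) := le_of_lt (lt_of_le_of_lt (by linarith) hq1)
          exact_mod_cast this
        have hmem : a + (q:ℝ) ∈ U ∩ Ici v := by
          constructor
          · apply hball
            rw [Real.ball_eq_Ioo]
            constructor <;> [linarith; linarith]
          · simp only [mem_Ici]; linarith
        have : r < g (a + q) := hsub hmem
        calc ((r:ℝ) : EReal) < ((g (a + q) : ℝ) : EReal) := EReal.coe_lt_coe_iff.2 this
          _ ≤ _ := le_iSup (fun q : {q : ℚ // 0 ≤ q} => ((g (a + q) : ℝ) : EReal)) ⟨q, hq0⟩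
    | top => exact absurd hc not_top_lt
  · refine iSup_le fun q => ?_
    have hq : (0:ℝ) ≤ (q.1:ℝ) := by exact_mod_cast q.2
    exact le_iSup_of_le ⟨a + q, by linarith⟩ le_rfl


lemma cadlag_bdd (g : ℝ → ℝ)
    (hr : ∀ s, 0 ≤ s → ContinuousWithinAt g (Ici s) s)
    (hl : ∀ s, 0 < s → ∃ l : ℝ, Tendsto g (nhdsWithin s (Iio s)) (nhds l))
    (t : ℝ) (ht : 0 ≤ t) : ∃ C : ℝ, ∀ s ∈ Icc (0:ℝ) t, |g s| ≤ C := by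
  have key : ∀ s ∈ Icc (0:ℝ) t, ∃ V : Set ℝ, V ∈ nhds s ∧ ∃ C, ∀ r ∈ V ∩ Icc (0:ℝ) t, |g r| ≤ C := by
    rintro s ⟨hs0, hst⟩
    -- right side
    have hright := hr s hs0
    have hU : {u : ℝ | |g u - g s| < 1} ∈ nhdsWithin s (Ici s) := by
      have : Metric.ball (g s) 1 ∈ nhds (g s) := Metric.ball_mem_nhds _ one_pos
      have := hright this
      refine Filter.mem_of_superset this ?_
      intro u hu
      simpa [Real.dist_eq] using hu
    rw [mem_nhdsWithin] at hU
    obtain ⟨U, hUo, hsU, hUsub⟩ := hU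
    obtain ⟨δ₁, hδ₁, hball₁⟩ := Metric.isOpen_iff.1 hUo s hsU
    rcases eq_or_lt_of_le hs0 with h0 | hspos
    · -- s = 0
      refine ⟨Metric.ball s δ₁, Metric.ball_mem_nhds _ hδ₁, |g s| + 1, ?_⟩
      rintro r ⟨hrV, hr0, hrt⟩
      have : r ∈ U ∩ Ici s := ⟨hball₁ hrV, by simp only [mem_Ici, ← h0]; exact hr0⟩
      have := hUsub this
      have : |g r - g s| < 1 := this
      calc |g r| ≤ |g s| + |g r - g s| := by
            have := abs_add_le (g s) (g r - g s); simpa [add_comm] using (by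
              have h := abs_add_le (g s) (g r - g s)
              simpa using h)
        _ ≤ |g s| + 1 := by linarith
    · -- s > 0
      obtain ⟨l, hlt⟩ := hl s hspos
      have hL : {u : ℝ | |g u - l| < 1} ∈ nhdsWithin s (Iio s) := by
        have : Metric.ball l 1 ∈ nhds l := Metric.ball_mem_nhds _ one_pos
        have := hlt this
        refine Filter.mem_of_superset this ?_
        intro u hu
        simpa [Real.dist_eq] using hu
      rw [mem_nhdsWithin] at hL
      obtain ⟨W, hWo, hsW, hWsub⟩ := hL
      obtain ⟨δ₂, hδ₂, hball₂⟩ := Metric.isOpen_iff.1 hWo s hsW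
      refine ⟨Metric.ball s (min δ₁ δ₂), Metric.ball_mem_nhds _ (lt_min hδ₁ hδ₂),
        max (|g s| + 1) (|l| + 1), ?_⟩
      rintro r ⟨hrV, hr0, hrt⟩
      rcases lt_or_ge r s with hrs | hsr
      · have : r ∈ W ∩ Iio s := ⟨hball₂ (Metric.ball_subset_ball (min_le_right _ _) hrV), hrs⟩
        have h1 : |g r - l| < 1 := hWsub this
        refine le_trans ?_ (le_max_right _ _)
        have := abs_sub_abs_le_abs_sub (g r) l
        linarith [abs_nonneg (g r - l)]
      · have : r ∈ U ∩ Ici s := ⟨hball₁ (Metric.ball_subset_ball (min_le_left _ _) hrV), hsr⟩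
        have h1 : |g r - g s| < 1 := hUsub this
        refine le_trans ?_ (le_max_left _ _)
        have := abs_sub_abs_le_abs_sub (g r) (g s)
        linarith [abs_nonneg (g r - g s)]
  classical
  choose V hV C hC using key
  obtain ⟨fin, hfin⟩ := isCompact_Icc.elim_nhds_subcover' V hV
  set c : ↑(Icc (0:ℝ) t) → ℝ := fun x => C x.1 x.2 with hc
  obtain ⟨M, hM⟩ : ∃ M : ℝ, ∀ x ∈ fin, c x ≤ M := by
    obtain ⟨M, hM⟩ := (fin.image c).exists_le
    exact ⟨M, fun x hx => hM _ (Finset.mem_image_of_mem _ hx)⟩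
  refine ⟨M, fun s hs => ?_⟩
  have := hfin hs
  simp only [mem_iUnion] at this
  obtain ⟨x, hx, hxV⟩ := this
  exact le_trans (hC x.1 x.2 s ⟨hxV, hs⟩) (hM x hx)

/-- countable skeleton index of `[0,t]`: rationals in `[0,t]` plus the endpoint `t`. -/
def rIdx (t : ℝ) : Type := Option {q : ℚ // 0 ≤ (q:ℝ) ∧ (q:ℝ) ≤ t}

instance (t : ℝ) : Countable (rIdx t) := by unfold rIdx; infer_instance
instance (t : ℝ) : Nonempty (rIdx t) := ⟨none⟩

def rVal (t : ℝ) (ht : 0 ≤ t) : rIdx t → Icc (0:ℝ) t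
  | none => ⟨t, ⟨ht, le_rfl⟩⟩
  | some q => ⟨(q:ℝ), ⟨q.2.1, q.2.2⟩⟩

def Upsi (t : ℝ) (ht : 0 ≤ t) (f : Icc (0:ℝ) t → ℝ) : EReal :=
  ⨆ i : rIdx t, ((f ⟨t, ⟨ht, le_rfl⟩⟩ - f (rVal t ht i) : ℝ) : EReal)

def OUpsi (t : ℝ) (ht : 0 ≤ t) (f : Icc (0:ℝ) t → ℝ) : EReal :=
  ⨆ p : rIdx t × rIdx t,
    if ((rVal t ht p.1 : Icc (0:ℝ) t) : ℝ) ≤ ((rVal t ht p.2 : Icc (0:ℝ) t) : ℝ)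
    then ((f (rVal t ht p.2) - f (rVal t ht p.1) : ℝ) : EReal) else ((0:ℝ) : EReal)

lemma measurable_Upsi (t : ℝ) (ht : 0 ≤ t) : Measurable (Upsi t ht) := by
  refine Measurable.iSup fun i => ?_
  exact measurable_coe_real_ereal.comp ((measurable_pi_apply _).sub (measurable_pi_apply _))

lemma measurable_OUpsi (t : ℝ) (ht : 0 ≤ t) : Measurable (OUpsi t ht) := by
  refine Measurable.iSup fun p => ?_
  by_cases h : ((rVal t ht p.1 : Icc (0:ℝ) t) : ℝ) ≤ ((rVal t ht p.2 : Icc (0:ℝ) t) : ℝ)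
  · simp only [h, if_true]
    exact measurable_coe_real_ereal.comp ((measurable_pi_apply _).sub (measurable_pi_apply _))
  · simp only [h, if_false]
    exact measurable_const

/-- From right-continuity at `s`, find a rational skeleton point in `(s, w]` whose value
lies in a given open set containing `g s`. -/
lemma exists_rat_right_mem (g : ℝ → ℝ) {s : ℝ} (hs0 : 0 ≤ s)
    (hr : ContinuousWithinAt g (Ici s) s) {w : ℝ} (hsw : s < w)
    {O : Set ℝ} (hO : IsOpen O) (hgs : g s ∈ O) :
    ∃ q : ℚ, 0 ≤ (q:ℝ) ∧ (q:ℝ) ≤ w ∧ s < (q:ℝ) ∧ g q ∈ O := by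
  have hU : g ⁻¹' O ∈ nhdsWithin s (Ici s) := hr (hO.mem_nhds hgs)
  rw [mem_nhdsWithin] at hU
  obtain ⟨U, hUo, hsU, hsub⟩ := hU
  obtain ⟨δ, hδ, hball⟩ := Metric.isOpen_iff.1 hUo s hsU
  obtain ⟨q, hq1, hq2⟩ := exists_rat_btwn (show s < min (s + δ) w from lt_min (by linarith) hsw)
  have hq2' : (q:ℝ) < s + δ := lt_of_lt_of_le hq2 (min_le_left _ _)
  have hq2'' : (q:ℝ) ≤ w := le_of_lt (lt_of_lt_of_le hq2 (min_le_right _ _))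
  refine ⟨q, le_of_lt (lt_of_le_of_lt hs0 hq1), hq2'', hq1, ?_⟩
  apply hsub
  constructor
  · apply hball
    rw [Real.ball_eq_Ioo]
    exact ⟨by linarith, by linarith⟩
  · exact le_of_lt hq1

lemma Upsi_eq (t : ℝ) (ht : 0 ≤ t) (g : ℝ → ℝ)
    (hr : ∀ s, 0 ≤ s → ContinuousWithinAt g (Ici s) s)
    (C : ℝ) (hC : ∀ s ∈ Icc (0:ℝ) t, |g s| ≤ C) :
    Upsi t ht (fun u : Icc (0:ℝ) t => g u) = ((g t - sInf (g '' Icc 0 t) : ℝ) : EReal) := by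
  have hbdd : BddBelow (g '' Icc (0:ℝ) t) := by
    refine ⟨-C, ?_⟩
    rintro y ⟨s, hs, rfl⟩
    exact neg_le_of_abs_le (hC s hs)
  have hne : (g '' Icc (0:ℝ) t).Nonempty := ⟨g t, mem_image_of_mem g ⟨ht, le_rfl⟩⟩
  refine le_antisymm ?_ ?_
  · refine iSup_le fun i => ?_
    rw [EReal.coe_le_coe_iff]
    have : sInf (g '' Icc 0 t) ≤ g (rVal t ht i) :=
      csInf_le hbdd (mem_image_of_mem g (rVal t ht i).2)
    linarith
  · refine le_of_forall_lt fun c hc => ?_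
    induction c with
    | bot =>
        refine lt_of_lt_of_le (EReal.bot_lt_coe _)
          (le_iSup (fun i : rIdx t => ((g (⟨t, ⟨ht, le_rfl⟩⟩ : Icc (0:ℝ) t) - g (rVal t ht i) : ℝ) : EReal)) none)
    | coe r =>
        rw [EReal.coe_lt_coe_iff] at hc
        have hinf : sInf (g '' Icc 0 t) < g t - r := by linarith
        obtain ⟨y, ⟨s, hs, rfl⟩, hy⟩ := (csInf_lt_iff hbdd hne).1 hinf
        -- find skeleton index i with g (rVal i) < g t - r
        obtain ⟨i, hi⟩ : ∃ i : rIdx t, g (rVal t ht i) < g t - r := by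
          rcases eq_or_lt_of_le hs.2 with hst | hst
          · exact ⟨none, by simpa [rVal, hst] using hy⟩
          · obtain ⟨q, hq0, hqt, _, hgq⟩ :=
              exists_rat_right_mem g hs.1 (hr s hs.1) hst isOpen_Iio hy
            exact ⟨some ⟨q, ⟨hq0, hqt⟩⟩, hgq⟩
        refine lt_of_lt_of_le ?_
          (le_iSup (fun i : rIdx t => ((g (⟨t, ⟨ht, le_rfl⟩⟩ : Icc (0:ℝ) t) - g (rVal t ht i) : ℝ) : EReal)) i)
        rw [EReal.coe_lt_coe_iff]
        show r < g (⟨t, ⟨ht, le_rfl⟩⟩ : Icc (0:ℝ) t) - g (rVal t ht i)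
        simp only []
        linarith
    | top => exact absurd hc not_top_lt


lemma OUpsi_eq (t : ℝ) (ht : 0 ≤ t) (g : ℝ → ℝ)
    (hr : ∀ s, 0 ≤ s → ContinuousWithinAt g (Ici s) s)
    (C : ℝ) (hC : ∀ s ∈ Icc (0:ℝ) t, |g s| ≤ C) :
    OUpsi t ht (fun u : Icc (0:ℝ) t => g u)
      = ((sSup ((fun u => g u - sInf (g '' Icc 0 u)) '' Icc 0 t) : ℝ) : EReal) := by
  -- basic bounds
  have hbb : ∀ u ∈ Icc (0:ℝ) t, BddBelow (g '' Icc (0:ℝ) u) := by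
    rintro u hu
    refine ⟨-C, ?_⟩
    rintro y ⟨s, hs, rfl⟩
    exact neg_le_of_abs_le (hC s ⟨hs.1, le_trans hs.2 hu.2⟩)
  have hnei : ∀ u ∈ Icc (0:ℝ) t, (g '' Icc (0:ℝ) u).Nonempty :=
    fun u hu => ⟨g u, mem_image_of_mem g ⟨hu.1, le_rfl⟩⟩
  have hInf_le : ∀ u ∈ Icc (0:ℝ) t, ∀ s ∈ Icc (0:ℝ) u, sInf (g '' Icc 0 u) ≤ g s :=
    fun u hu s hs => csInf_le (hbb u hu) (mem_image_of_mem g hs)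
  have hOne : ((fun u => g u - sInf (g '' Icc 0 u)) '' Icc 0 t).Nonempty :=
    ⟨_, mem_image_of_mem _ (show t ∈ Icc (0:ℝ) t from ⟨ht, le_rfl⟩)⟩
  have hOb : BddAbove ((fun u => g u - sInf (g '' Icc 0 u)) '' Icc 0 t) := by
    refine ⟨C + C, ?_⟩
    rintro y ⟨u, hu, rfl⟩
    have h1 : g u ≤ C := le_of_abs_le (hC u hu)
    have h2 : -C ≤ sInf (g '' Icc 0 u) := by
      refine le_csInf (hnei u hu) ?_
      rintro y ⟨s, hs, rfl⟩
      exact neg_le_of_abs_le (hC s ⟨hs.1, le_trans hs.2 hu.2⟩)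
    simp only []
    linarith
  have hsup_nonneg : 0 ≤ sSup ((fun u => g u - sInf (g '' Icc 0 u)) '' Icc 0 t) := by
    have ht' : (t:ℝ) ∈ Icc (0:ℝ) t := ⟨ht, le_rfl⟩
    have := le_csSup hOb (mem_image_of_mem _ ht')
    have h0 : sInf (g '' Icc 0 t) ≤ g t := hInf_le t ht' t ht'
    linarith
  refine le_antisymm ?_ ?_
  · refine iSup_le fun p => ?_
    by_cases h : ((rVal t ht p.1 : Icc (0:ℝ) t) : ℝ) ≤ ((rVal t ht p.2 : Icc (0:ℝ) t) : ℝ)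
    · simp only [h, if_true]
      rw [EReal.coe_le_coe_iff]
      set a := rVal t ht p.1
      set b := rVal t ht p.2
      have h1 : sInf (g '' Icc 0 (b:ℝ)) ≤ g a :=
        hInf_le (b:ℝ) b.2 (a:ℝ) ⟨a.2.1, h⟩
      have h2 : g (b:ℝ) - sInf (g '' Icc 0 (b:ℝ))
          ≤ sSup ((fun u => g u - sInf (g '' Icc 0 u)) '' Icc 0 t) :=
        le_csSup hOb (mem_image_of_mem _ b.2)
      linarith
    · simp only [h, if_false]
      exact EReal.coe_le_coe_iff.2 hsup_nonneg
  · refine le_of_forall_lt fun c hc => ?_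
    induction c with
    | bot =>
        refine lt_of_lt_of_le (EReal.bot_lt_coe (0:ℝ)) ?_
        refine le_trans (le_of_eq ?_) (le_iSup _ ((none : rIdx t), (none : rIdx t)))
        simp [rVal]
    | top => exact absurd hc not_top_lt
    | coe r =>
        rw [EReal.coe_lt_coe_iff] at hc
        obtain ⟨y, ⟨u, hu, rfl⟩, hy⟩ := exists_lt_of_lt_csSup hOne hc
        simp only [] at hy
        -- r < g u - sInf (g '' Icc 0 u)
        have hinf : sInf (g '' Icc 0 u) < g u - r := by linarith
        obtain ⟨y', ⟨s, hs, rfl⟩, hy'⟩ := (csInf_lt_iff (hbb u hu) (hnei u hu)).1 hinf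
        -- g s < g u - r, s ∈ [0,u]
        by_cases hst : s = t
        · -- then s = u = t and r < 0; use the pair (none, none)
          have hsu : s = u := le_antisymm hs.2 (by rw [hst]; exact hu.2)
          have hr0 : r < 0 := by rw [← hsu] at hy'; linarith
          refine lt_of_lt_of_le ?_ (le_iSup _ ((none : rIdx t), (none : rIdx t)))
          simp only [rVal, le_refl, if_true, sub_self]
          exact EReal.coe_lt_coe_iff.2 (by simpa using hr0)
        · have hstlt : s < t := lt_of_le_of_ne (le_trans hs.2 hu.2) hst
          set ε := (g u - r - g s) / 2 with hε
          have hεpos : 0 < ε := by simp only [hε]; linarith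
          -- choose j approximating u from the right with value > g u - ε
          obtain ⟨j, hjval, hjg, hsv0⟩ : ∃ j : rIdx t, u ≤ ((rVal t ht j : Icc (0:ℝ) t) : ℝ)
              ∧ g u - ε < g ((rVal t ht j : Icc (0:ℝ) t) : ℝ)
              ∧ s < ((rVal t ht j : Icc (0:ℝ) t) : ℝ) := by
            rcases eq_or_lt_of_le hu.2 with hut | hut
            · refine ⟨none, ?_, ?_, ?_⟩
              · simp [rVal, ← hut]
              · simp only [rVal, ← hut]
                linarith
              · simpa [rVal] using hstlt
            · obtain ⟨q, hq0, hqt, hqgt, hgq⟩ :=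
                exists_rat_right_mem g hu.1 (hr u hu.1) hut isOpen_Ioi
                  (show g u ∈ Ioi (g u - ε) by simp only [mem_Ioi]; linarith)
              have hgq' : g u - ε < g (q:ℝ) := hgq
              exact ⟨some ⟨q, ⟨hq0, hqt⟩⟩, le_of_lt hqgt, hgq', lt_of_le_of_lt hs.2 hqgt⟩
          set v := ((rVal t ht j : Icc (0:ℝ) t) : ℝ) with hv
          have hvt : v ≤ t := (rVal t ht j).2.2
          have hsv : s < v := hsv0
          -- choose i approximating s from the right with value < g s + ε, below v
          obtain ⟨q1, hq10, hq1v, hq1gt, hgq1⟩ :=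
            exists_rat_right_mem g hs.1 (hr s hs.1) hsv isOpen_Iio
              (show g s ∈ Iio (g s + ε) by simp only [mem_Iio]; linarith)
          set i : rIdx t := some ⟨q1, ⟨hq10, le_trans hq1v hvt⟩⟩ with hi
          refine lt_of_lt_of_le ?_ (le_iSup _ ((i : rIdx t), (j : rIdx t)))
          have hcond : ((rVal t ht i : Icc (0:ℝ) t) : ℝ) ≤ ((rVal t ht j : Icc (0:ℝ) t) : ℝ) := by
            simp only [hi, rVal]
            exact hq1v
          simp only [hcond, if_true]
          rw [EReal.coe_lt_coe_iff]
          show r < g ((rVal t ht j : Icc (0:ℝ) t) : ℝ) - g ((rVal t ht i : Icc (0:ℝ) t) : ℝ)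
          have : g ((rVal t ht i : Icc (0:ℝ) t) : ℝ) = g q1 := by simp only [hi, rVal]
          rw [this]
          have h1 : g u - ε < g v := hjg
          rw [mem_Iio] at hgq1
          simp only [hε] at h1 hgq1 ⊢
          linarith


lemma ereal_lt_add_iff (x d : ℝ) (K : EReal) :
    ((x : ℝ) : EReal) < (d : EReal) + K ↔ ((x - d : ℝ) : EReal) < K := by
  induction K with
  | bot => simp [EReal.add_bot]
  | top =>
      rw [EReal.coe_add_top]
      constructor <;> intro _ <;> exact EReal.coe_lt_top _
  | coe r =>
      rw [← EReal.coe_add, EReal.coe_lt_coe_iff, EReal.coe_lt_coe_iff]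
      constructor <;> intro <;> linarith

lemma ovUStarInf_eq_max (X : ℝ → Ω → ℝ) (ω : Ω) (t : ℝ) (ht : 0 ≤ t)
    (hr : ∀ s, 0 ≤ s → ContinuousWithinAt (fun u => X u ω) (Ici s) s)
    (C : ℝ) (hC : ∀ s ∈ Icc (0:ℝ) t, |X s ω| ≤ C) :
    ovUStarInf X t ω
      = max ((ovU X t ω : ℝ) : EReal) (((drawup X t ω : ℝ) : EReal) + futSupE X t ω) := by
  set g : ℝ → ℝ := fun s => X s ω with hg
  have hbb : ∀ u ∈ Icc (0:ℝ) t, BddBelow (g '' Icc (0:ℝ) u) := by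
    rintro u hu
    refine ⟨-C, ?_⟩
    rintro y ⟨s, hs, rfl⟩
    exact neg_le_of_abs_le (hC s ⟨hs.1, le_trans hs.2 hu.2⟩)
  have hnei : ∀ u ∈ Icc (0:ℝ) t, (g '' Icc (0:ℝ) u).Nonempty :=
    fun u hu => ⟨g u, mem_image_of_mem g ⟨hu.1, le_rfl⟩⟩
  have hInf_le : ∀ u ∈ Icc (0:ℝ) t, ∀ s ∈ Icc (0:ℝ) u, sInf (g '' Icc 0 u) ≤ g s :=
    fun u hu s hs => csInf_le (hbb u hu) (mem_image_of_mem g hs)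
  have hunX : ∀ u, unX X u ω = sInf (g '' Icc 0 u) := fun u => rfl
  have hdw : ∀ u, drawup X u ω = g u - sInf (g '' Icc 0 u) := fun u => rfl
  have hOne : ((fun u => drawup X u ω) '' Icc 0 t).Nonempty :=
    ⟨_, mem_image_of_mem _ (show t ∈ Icc (0:ℝ) t from ⟨ht, le_rfl⟩)⟩
  have hOb : BddAbove ((fun u => drawup X u ω) '' Icc 0 t) := by
    refine ⟨C + C, ?_⟩
    rintro y ⟨u, hu, rfl⟩
    have h1 : g u ≤ C := le_of_abs_le (hC u hu)
    have h2 : -C ≤ sInf (g '' Icc 0 u) := by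
      refine le_csInf (hnei u hu) ?_
      rintro y ⟨s, hs, rfl⟩
      exact neg_le_of_abs_le (hC s ⟨hs.1, le_trans hs.2 hu.2⟩)
    show drawup X u ω ≤ C + C
    rw [hdw]
    linarith
  have hdrawup_le : ∀ u ∈ Icc (0:ℝ) t, drawup X u ω ≤ ovU X t ω :=
    fun u hu => le_csSup hOb (mem_image_of_mem _ hu)
  have hbot : (⊥ : EReal) < ovUStarInf X t ω := by
    refine lt_of_lt_of_le (EReal.bot_lt_coe (g t - g t)) ?_
    refine le_trans (le_iSup (fun v : {v : ℝ // t ≤ v} => ((g v - g t : ℝ) : EReal)) ⟨t, le_rfl⟩) ?_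
    exact le_iSup (fun u : Icc (0:ℝ) t => futSupE X u ω) ⟨t, ⟨ht, le_rfl⟩⟩
  refine le_antisymm ?_ ?_
  · refine iSup_le fun u => ?_
    refine iSup_le fun v => ?_
    obtain ⟨u, hu⟩ := u
    obtain ⟨v, huv⟩ := v
    rcases le_total v t with hvt | htv
    · refine le_trans ?_ (le_max_left _ _)
      rw [EReal.coe_le_coe_iff]
      have h1 : sInf (g '' Icc 0 v) ≤ g u := hInf_le v ⟨le_trans hu.1 huv, hvt⟩ u ⟨hu.1, huv⟩
      have h2 : drawup X v ω ≤ ovU X t ω := hdrawup_le v ⟨le_trans hu.1 huv, hvt⟩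
      rw [hdw] at h2
      exact le_trans (by linarith) h2
    · refine le_trans ?_ (le_max_right _ _)
      have : (X v ω - X u ω : ℝ) = (drawup X t ω) + ((g v - g t) - (drawup X t ω - (g t - g u))) := by ring
      have heq : ((X v ω - X u ω : ℝ) : EReal)
          = ((g t - g u : ℝ) : EReal) + ((g v - g t : ℝ) : EReal) := by
        rw [← EReal.coe_add]; norm_num; rfl
      rw [heq]
      refine add_le_add ?_ ?_
      · rw [EReal.coe_le_coe_iff, hdw]
        have : sInf (g '' Icc 0 t) ≤ g u := hInf_le t ⟨ht, le_rfl⟩ u ⟨hu.1, hu.2⟩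
        linarith
      · exact le_iSup (fun v : {v : ℝ // t ≤ v} => ((X v ω - X t ω : ℝ) : EReal)) ⟨v, htv⟩
  · refine max_le ?_ ?_
    · refine le_of_forall_lt fun c hc => ?_
      induction c with
      | bot => exact hbot
      | top => exact absurd hc not_top_lt
      | coe r =>
          rw [EReal.coe_lt_coe_iff] at hc
          obtain ⟨y, ⟨u, hu, rfl⟩, hy⟩ := exists_lt_of_lt_csSup hOne hc
          simp only [hdw] at hy
          have hinf : sInf (g '' Icc 0 u) < g u - r := by linarith
          obtain ⟨y', ⟨s, hs, rfl⟩, hy'⟩ := (csInf_lt_iff (hbb u hu) (hnei u hu)).1 hinf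
          have h1 : ((r:ℝ):EReal) < ((g u - g s : ℝ) : EReal) := EReal.coe_lt_coe_iff.2 (by linarith)
          refine lt_of_lt_of_le h1 ?_
          refine le_trans (le_iSup (fun v : {v : ℝ // s ≤ v} => ((X v ω - X s ω : ℝ) : EReal)) ⟨u, hs.2⟩) ?_
          exact le_iSup (fun u : Icc (0:ℝ) t => futSupE X u ω) ⟨s, ⟨hs.1, le_trans hs.2 hu.2⟩⟩
    · have hrw : ((drawup X t ω : ℝ) : EReal) + futSupE X t ω
          = ⨆ v : {v : ℝ // t ≤ v}, ((drawup X t ω + (X v ω - X t ω) : ℝ) : EReal) := by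
        rw [ereal_add_iSup (drawup X t ω) (fun v : {v : ℝ // t ≤ v} => X v ω - X t ω)]
        rfl
      rw [hrw]
      refine iSup_le fun v => ?_
      obtain ⟨v, htv⟩ := v
      refine le_of_forall_lt fun c hc => ?_
      induction c with
      | bot => exact hbot
      | top => exact absurd hc not_top_lt
      | coe r =>
          rw [EReal.coe_lt_coe_iff, hdw] at hc
          have hinf : sInf (g '' Icc 0 t) < g v - r := by linarith
          obtain ⟨y', ⟨s, hs, rfl⟩, hy'⟩ :=
            (csInf_lt_iff (hbb t ⟨ht, le_rfl⟩) (hnei t ⟨ht, le_rfl⟩)).1 hinf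
          have h1 : ((r:ℝ):EReal) < ((g v - g s : ℝ) : EReal) := EReal.coe_lt_coe_iff.2 (by linarith)
          refine lt_of_lt_of_le h1 ?_
          refine le_trans (le_iSup (fun w : {w : ℝ // s ≤ w} => ((X w ω - X s ω : ℝ) : EReal))
            ⟨v, le_trans hs.2 htv⟩) ?_
          exact le_iSup (fun u : Icc (0:ℝ) t => futSupE X u ω) ⟨s, hs⟩


/-- **Tail decomposition identity** (equation (eq:asympp)): if `E[X_1⁺] < ∞` and the
mean of `X_1` is negative (possibly `-∞`), so that `M = sup_{s≥0} X_s` is a.s. finite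
and `F(y) = P(M > y)`, then for all `t ≥ 0` and `x ≥ 0`,
`P(\overline U^*_t > x) = P(\overline U_t > x) + E[F(x - U_t) 1_{\overline U_t ≤ x}]`. -/
theorem tail_decomposition_ovUStar
    {Ω : Type*} [MeasurableSpace Ω] (P : Measure Ω) [IsProbabilityMeasure P]
    (X : ℝ → Ω → ℝ) (hX : IsLevyProcess P X)
    (hplus : ∫⁻ ω, ENNReal.ofReal (max (X 1 ω) 0) ∂P < ⊤)
    (hmean : ∫⁻ ω, ENNReal.ofReal (max (X 1 ω) 0) ∂P
      < ∫⁻ ω, ENNReal.ofReal (max (-X 1 ω) 0) ∂P)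
    (t : ℝ) (ht : 0 ≤ t) (x : ℝ) (hx : 0 ≤ x) :
    P {ω | (x : EReal) < ovUStarInf X t ω}
      = P {ω | x < ovU X t ω}
        + ∫⁻ ω in {ω | ovU X t ω ≤ x},
            P {ω' | ((x - drawup X t ω : ℝ) : EReal) < MSup X ω'} ∂P := by
  classical
  have hrc : ∀ ω : Ω, ∀ s, 0 ≤ s → ContinuousWithinAt (fun u => X u ω) (Ici s) s :=
    hX.right_cont
  have hbdd : ∀ ω : Ω, ∃ C, ∀ s ∈ Icc (0:ℝ) t, |X s ω| ≤ C := fun ω =>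
    cadlag_bdd (fun s => X s ω) (hrc ω) (hX.left_lim ω) t ht
  set ψ : (Icc (0:ℝ) t → ℝ) → ℝ × ℝ :=
    fun f => ((Upsi t ht f).toReal, (OUpsi t ht f).toReal) with hψdef
  set φ : (ℝ → ℝ) → EReal := fun f => ⨆ q : {q : ℚ // 0 ≤ q}, ((f q : ℝ) : EReal) with hφdef
  set G : Ω → (Icc (0:ℝ) t → ℝ) := fun ω => fun u : Icc (0:ℝ) t => X u ω with hGdef
  set Fm : Ω → (ℝ → ℝ) := fun ω => fun s : ℝ => X (t + max s 0) ω - X t ω with hFdef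
  set F0 : Ω → (ℝ → ℝ) := fun ω => fun s : ℝ => X (max s 0) ω with hF0def
  set A : Ω → ℝ × ℝ := fun ω => ψ (G ω) with hAdef
  set B : Ω → EReal := fun ω => φ (Fm ω) with hBdef
  -- pathwise identifications
  have hA1 : ∀ ω, A ω = (drawup X t ω, ovU X t ω) := by
    intro ω
    obtain ⟨C, hC⟩ := hbdd ω
    have e1 : Upsi t ht (G ω) = ((drawup X t ω : ℝ) : EReal) :=
      Upsi_eq t ht (fun s => X s ω) (hrc ω) C hC
    have e2 : OUpsi t ht (G ω) = ((ovU X t ω : ℝ) : EReal) :=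
      OUpsi_eq t ht (fun s => X s ω) (hrc ω) C hC
    show (((Upsi t ht (G ω)).toReal : ℝ), ((OUpsi t ht (G ω)).toReal : ℝ))
        = (drawup X t ω, ovU X t ω)
    rw [e1, e2, EReal.toReal_coe, EReal.toReal_coe]
  have hA1a : ∀ ω, (Upsi t ht (G ω)).toReal = drawup X t ω :=
    fun ω => congrArg Prod.fst (hA1 ω)
  have hA1b : ∀ ω, (OUpsi t ht (G ω)).toReal = ovU X t ω :=
    fun ω => congrArg Prod.snd (hA1 ω)
  have hBω : ∀ ω, B ω = futSupE X t ω := by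
    intro ω
    have h3 := sup_eq_sup_rat (fun v => X v ω - X t ω) t
      (fun v hv => ((hrc ω v (le_trans ht hv)).sub continuousWithinAt_const))
    calc B ω = ⨆ q : {q : ℚ // 0 ≤ q}, ((X (t + (q:ℝ)) ω - X t ω : ℝ) : EReal) := by
          refine iSup_congr fun q => ?_
          have hm : max ((q:ℝ)) 0 = (q:ℝ) := max_eq_left (by exact_mod_cast q.2)
          show ((X (t + max ((q:ℝ)) 0) ω - X t ω : ℝ) : EReal) = _
          rw [hm]
      _ = futSupE X t ω := h3.symm
  have hMω : ∀ ω, φ (F0 ω) = MSup X ω := by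
    intro ω
    have h4 := sup_eq_sup_rat (fun v => X v ω) 0 (fun v hv => hrc ω v hv)
    calc φ (F0 ω) = ⨆ q : {q : ℚ // 0 ≤ q}, (((fun v => X v ω) (0 + (q:ℝ)) : ℝ) : EReal) := by
          refine iSup_congr fun q => ?_
          have hm : max ((q:ℝ)) 0 = (q:ℝ) := max_eq_left (by exact_mod_cast q.2)
          show ((X (max ((q:ℝ)) 0) ω : ℝ) : EReal) = _
          rw [hm]
          norm_num
      _ = MSup X ω := h4.symm
  -- measurability
  have hGm : Measurable G := measurable_pi_lambda _ fun u => hX.measurable u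
  have hFmm : Measurable Fm := measurable_pi_lambda _ fun s =>
    (hX.measurable _).sub (hX.measurable t)
  have hF0m : Measurable F0 := measurable_pi_lambda _ fun s => hX.measurable _
  have hφm : Measurable φ := by
    refine Measurable.iSup fun q => ?_
    exact measurable_coe_real_ereal.comp (measurable_pi_apply _)
  have hψm : Measurable ψ :=
    (measurable_ereal_toReal.comp (measurable_Upsi t ht)).prodMk
      (measurable_ereal_toReal.comp (measurable_OUpsi t ht))
  have hAm : Measurable A := hψm.comp hGm
  have hBm : Measurable B := hφm.comp hFmm
  -- independence
  have hind : IndepFun A B P := by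
    have h := (hX.indep_incr t ht).comp hφm hψm
    exact h.symm
  -- law of B
  have hlawB : ∀ y : EReal, (Measure.map B P) (Ioi y) = P {ω' | y < MSup X ω'} := by
    intro y
    have hst := hX.stat_incr t ht
    rw [← hFdef, ← hF0def] at hst
    have hmm : Measure.map B P = Measure.map (fun ω => φ (F0 ω)) P := by
      calc Measure.map B P = Measure.map φ (Measure.map Fm P) :=
            (Measure.map_map hφm hFmm).symm
        _ = Measure.map φ (Measure.map F0 P) := by rw [hst]
        _ = Measure.map (fun ω => φ (F0 ω)) P := Measure.map_map hφm hF0m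
    rw [hmm, Measure.map_apply (show Measurable fun ω => φ (F0 ω) from hφm.comp hF0m)
      measurableSet_Ioi]
    congr 1
    ext ω'
    simp only [mem_preimage, mem_Ioi, mem_setOf_eq]
    rw [hMω ω']
  -- the event split
  set S : Set ((ℝ × ℝ) × EReal) :=
    {p | p.1.2 ≤ x ∧ ((x - p.1.1 : ℝ) : EReal) < p.2} with hSdef
  have hSm : MeasurableSet S := by
    have : S = {p : (ℝ × ℝ) × EReal | p.1.2 ≤ x}
        ∩ {p : (ℝ × ℝ) × EReal | ((x - p.1.1 : ℝ) : EReal) < p.2} := rfl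
    rw [this]
    refine MeasurableSet.inter ?_ ?_
    · exact measurableSet_le measurable_fst.snd measurable_const
    · exact measurableSet_lt
        (measurable_coe_real_ereal.comp (measurable_const.sub measurable_fst.fst))
        measurable_snd
  set E1 : Set Ω := {ω | x < ovU X t ω} with hE1def
  set E2 : Set Ω := {ω | ovU X t ω ≤ x ∧ ((x - drawup X t ω : ℝ) : EReal) < B ω} with hE2def
  have hE2pre : E2 = (fun ω => (A ω, B ω)) ⁻¹' S := by
    ext ω
    simp only [hE2def, hSdef, mem_setOf_eq, mem_preimage]
    simp only [A, ψ, hA1a ω, hA1b ω]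
  have hE1pre : E1 = A ⁻¹' {p : ℝ × ℝ | x < p.2} := by
    ext ω
    simp only [hE1def, mem_setOf_eq, mem_preimage]
    simp only [A, ψ, hA1a ω, hA1b ω]
  have hE2m : MeasurableSet E2 := by
    rw [hE2pre]; exact (hAm.prodMk hBm) hSm
  have hsplit : {ω | (x : EReal) < ovUStarInf X t ω} = E1 ∪ E2 := by
    ext ω
    obtain ⟨C, hC⟩ := hbdd ω
    simp only [mem_setOf_eq, mem_union, hE1def, hE2def]
    rw [ovUStarInf_eq_max X ω t ht (hrc ω) C hC, lt_max_iff, hBω ω,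
      EReal.coe_lt_coe_iff]
    constructor
    · rintro (h | h)
      · exact Or.inl h
      · rcases le_or_gt (ovU X t ω) x with hle | hlt
        · exact Or.inr ⟨hle, (ereal_lt_add_iff x (drawup X t ω) (futSupE X t ω)).1 h⟩
        · exact Or.inl hlt
    · rintro (h | h)
      · exact Or.inl h
      · exact Or.inr ((ereal_lt_add_iff x (drawup X t ω) (futSupE X t ω)).2 h.2)
  have hdisj : Disjoint E1 E2 := by
    rw [Set.disjoint_left]
    rintro ω h1 ⟨h2, _⟩
    exact absurd h1 (not_lt.2 h2)
  rw [hsplit, measure_union hdisj hE2m]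
  congr 1
  -- P E2 = the integral
  haveI : IsProbabilityMeasure (Measure.map B P) := Measure.isProbabilityMeasure_map hBm.aemeasurable
  have hmapAB : Measure.map (fun ω => (A ω, B ω)) P
      = (Measure.map A P).prod (Measure.map B P) :=
    (ProbabilityTheory.indepFun_iff_map_prod_eq_prod_map_map hAm.aemeasurable
      hBm.aemeasurable).1 hind
  have hPE2 : P E2 = ((Measure.map A P).prod (Measure.map B P)) S := by
    rw [hE2pre, ← Measure.map_apply (hAm.prodMk hBm) hSm, hmapAB]
  have hh : Measurable (fun a : ℝ × ℝ => (Measure.map B P) (Prod.mk a ⁻¹' S)) :=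
    measurable_measure_prodMk_left hSm
  have hOvUm : MeasurableSet {ω | ovU X t ω ≤ x} := by
    have : {ω | ovU X t ω ≤ x} = A ⁻¹' {p : ℝ × ℝ | p.2 ≤ x} := by
      ext ω
      simp only [mem_setOf_eq, mem_preimage]
      simp only [A, ψ, hA1a ω, hA1b ω]
    rw [this]
    exact hAm (measurableSet_le measurable_snd measurable_const)
  have hpt : ∀ ω, (Measure.map B P) (Prod.mk (A ω) ⁻¹' S)
      = Set.indicator {ω | ovU X t ω ≤ x}
          (fun ω => P {ω' | ((x - drawup X t ω : ℝ) : EReal) < MSup X ω'}) ω := by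
    intro ω
    rw [hA1 ω]
    by_cases hle : ovU X t ω ≤ x
    · rw [Set.indicator_of_mem (show ω ∈ {ω | ovU X t ω ≤ x} from hle)]
      have hpre : Prod.mk ((drawup X t ω, ovU X t ω)) ⁻¹' S
          = Ioi (((x - drawup X t ω : ℝ)) : EReal) := by
        ext b
        simp only [hSdef, mem_preimage, mem_setOf_eq, mem_Ioi, hle, true_and]
      rw [hpre, hlawB]
    · rw [Set.indicator_of_notMem (show ω ∉ {ω | ovU X t ω ≤ x} from hle)]
      have hpre : Prod.mk ((drawup X t ω, ovU X t ω)) ⁻¹' S = ∅ := by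
        ext b
        simp only [hSdef, mem_preimage, mem_setOf_eq, mem_empty_iff_false, iff_false,
          not_and]
        intro h
        exact absurd h hle
      rw [hpre, measure_empty]
  calc P E2 = ((Measure.map A P).prod (Measure.map B P)) S := hPE2
    _ = ∫⁻ a, (Measure.map B P) (Prod.mk a ⁻¹' S) ∂(Measure.map A P) :=
        Measure.prod_apply hSm
    _ = ∫⁻ ω, (Measure.map B P) (Prod.mk (A ω) ⁻¹' S) ∂P := lintegral_map hh hAm
    _ = ∫⁻ ω, Set.indicator {ω | ovU X t ω ≤ x}
          (fun ω => P {ω' | ((x - drawup X t ω : ℝ) : EReal) < MSup X ω'}) ω ∂P :=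
        lintegral_congr hpt
    _ = ∫⁻ ω in {ω | ovU X t ω ≤ x},
          P {ω' | ((x - drawup X t ω : ℝ) : EReal) < MSup X ω'} ∂P :=
        lintegral_indicator hOvUm _


end
end
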